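/- arXiv:2501.01914 — 9 statements merged into one kernel-verified Lean document; each statement's English description precedes it below -/
import Mathlib

section
/- Let S ⊆ ℝ² be a measurable set which is unbounded and has positive Lebesgue measure. Then S contains the three vertices of an isosceles triangle of area 1; that is, there exist points a, b, c ∈ S such that dist(a,b) = dist(a,c), the points are not collinear, and (1/2)·|det(b − a, c − a)| = 1. -/
open MeasureTheory Metric

/-- `det(u,v) = u₁v₂ − u₂v₁` for vectors in the Euclidean plane. -/
def det2 (u v : EuclideanSpace ℝ (Fin 2)) : ℝ := u 0 * v 1 - u 1 * v 0

noncomputable section TwistAux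

open Complex Real

/-- The twist map about `a`: rotate `z` around `a` by angle `arcsin (2 / |z-a|²)`. -/
def tw (a z : ℂ) : ℂ :=
  a + (z - a) * Complex.exp ((Real.arcsin (2 / Complex.normSq (z - a)) : ℝ) * Complex.I)

/-- The derivative of `normSq (· - a)`. -/
def DnormSq (a z : ℂ) : ℂ →L[ℝ] ℝ :=
  (2 * (z - a).re) • Complex.reCLM + (2 * (z - a).im) • Complex.imCLM

/-- Candidate derivative of the twist map. -/
def twD (a z : ℂ) : ℂ →L[ℝ] ℂ :=
  ContinuousLinearMap.mul ℝ ℂ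
      (Complex.exp ((Real.arcsin (2 / Complex.normSq (z - a)) : ℝ) * Complex.I)) +
    (((1 / Real.sqrt (1 - (2 / Complex.normSq (z - a)) ^ 2)) *
        (-2 / Complex.normSq (z - a) ^ 2)) • DnormSq a z).smulRight
      ((z - a) * Complex.I *
        Complex.exp ((Real.arcsin (2 / Complex.normSq (z - a)) : ℝ) * Complex.I))

lemma normSq_tw_sub (a z : ℂ) : Complex.normSq (tw a z - a) = Complex.normSq (z - a) := by
  have h : tw a z - a = (z - a) *
      Complex.exp ((Real.arcsin (2 / Complex.normSq (z - a)) : ℝ) * Complex.I) := by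
    simp [tw]
  rw [h, Complex.normSq_mul, ← Complex.sq_norm
    (Complex.exp ((Real.arcsin (2 / Complex.normSq (z - a)) : ℝ) * Complex.I)),
    Complex.norm_exp_ofReal_mul_I]
  ring

lemma tw_injective (a : ℂ) : Function.Injective (tw a) := by
  intro z₁ z₂ h
  have hn : Complex.normSq (z₁ - a) = Complex.normSq (z₂ - a) := by
    rw [← normSq_tw_sub a z₁, ← normSq_tw_sub a z₂, h]
  have h' : (z₁ - a) * Complex.exp ((Real.arcsin (2 / Complex.normSq (z₁ - a)) : ℝ) * Complex.I)
      = (z₂ - a) * Complex.exp ((Real.arcsin (2 / Complex.normSq (z₁ - a)) : ℝ) * Complex.I) := by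
    have := h
    simp only [tw, hn] at this ⊢
    exact add_left_cancel this
  have := mul_right_cancel₀ (Complex.exp_ne_zero _) h'
  exact sub_left_injective this


lemma hasFDerivAt_tw (a z : ℂ) (h4 : 4 < Complex.normSq (z - a)) :
    HasFDerivAt (tw a) (twD a z) z := by
  set s : ℝ := Complex.normSq (z - a) with hs_def
  have hs0 : s ≠ 0 := by linarith
  have hu_pos : 0 < 2 / s := by positivity
  have hu_lt : 2 / s < 1 := by
    rw [div_lt_one (by linarith)]; linarith
  have hu1 : 2 / s ≠ -1 := by linarith
  have hu2 : 2 / s ≠ 1 := by linarith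
  -- derivative of re and im of z - a
  have hre : HasFDerivAt (fun z : ℂ => (z - a).re) Complex.reCLM z := by
    have h : (fun z : ℂ => (z - a).re) = fun z : ℂ => Complex.reCLM z - a.re := by
      funext w; simp [Complex.sub_re]
    rw [h]; exact Complex.reCLM.hasFDerivAt.sub_const _
  have him : HasFDerivAt (fun z : ℂ => (z - a).im) Complex.imCLM z := by
    have h : (fun z : ℂ => (z - a).im) = fun z : ℂ => Complex.imCLM z - a.im := by
      funext w; simp [Complex.sub_im]
    rw [h]; exact Complex.imCLM.hasFDerivAt.sub_const _
  -- derivative of normSq (z - a)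
  have hS : HasFDerivAt (fun z : ℂ => Complex.normSq (z - a)) (DnormSq a z) z := by
    have h1 := (hre.mul hre).add (him.mul him)
    have h2 : (fun z : ℂ => Complex.normSq (z - a))
        = fun z : ℂ => (z - a).re * (z - a).re + (z - a).im * (z - a).im := by
      funext w; exact Complex.normSq_apply _
    rw [h2]
    refine h1.congr_fderiv ?_
    ext h; simp [DnormSq]; ring
  -- derivative of 2 / normSq (z - a)
  have hU : HasFDerivAt (fun z : ℂ => 2 / Complex.normSq (z - a))
      ((-2 / s ^ 2) • DnormSq a z) z := by
    have hinv := ((hasDerivAt_inv hs0).comp_hasFDerivAt z hS).const_mul (2 : ℝ)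
    have h2 : (fun z : ℂ => 2 / Complex.normSq (z - a))
        = fun z : ℂ => 2 * (Complex.normSq (z - a))⁻¹ := by
      funext w; rw [div_eq_mul_inv]
    rw [h2]
    have h3 : (-2 / s ^ 2) • DnormSq a z = (2 : ℝ) • (-(s ^ 2)⁻¹ • DnormSq a z) := by
      rw [smul_smul]; congr 1; field_simp
    rw [h3]; exact hinv
  -- derivative of arcsin (2 / normSq (z - a))
  have hφ : HasFDerivAt (fun z : ℂ => Real.arcsin (2 / Complex.normSq (z - a)))
      (((1 / Real.sqrt (1 - (2 / s) ^ 2)) * (-2 / s ^ 2)) • DnormSq a z) z := by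
    have := (Real.hasDerivAt_arcsin hu1 hu2).comp_hasFDerivAt z hU
    rwa [smul_smul] at this
  set k : ℝ := (1 / Real.sqrt (1 - (2 / s) ^ 2)) * (-2 / s ^ 2) with hk_def
  -- derivative of (arcsin (2 / normSq (z - a)) : ℂ) * I
  have hM : HasFDerivAt (fun z : ℂ => ((Real.arcsin (2 / Complex.normSq (z - a)) : ℝ) : ℂ)
      * Complex.I) ((k • DnormSq a z).smulRight Complex.I) z := by
    set M : ℝ →L[ℝ] ℂ := (ContinuousLinearMap.id ℝ ℝ).smulRight Complex.I with hM_def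
    have h1 := M.hasFDerivAt.comp z hφ
    have h2 : (fun z : ℂ => ((Real.arcsin (2 / Complex.normSq (z - a)) : ℝ) : ℂ) * Complex.I)
        = fun z : ℂ => M (Real.arcsin (2 / Complex.normSq (z - a))) := by
      funext w; simp [hM_def, Complex.real_smul]
    rw [h2]
    refine h1.congr_fderiv ?_
    ext h; simp [hM_def, Complex.real_smul]; try ring
  -- derivative of exp ((arcsin _ : ℂ) * I)
  have hE : HasFDerivAt (fun z : ℂ => Complex.exp
      (((Real.arcsin (2 / Complex.normSq (z - a)) : ℝ) : ℂ) * Complex.I))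
      ((k • DnormSq a z).smulRight (Complex.I * Complex.exp
        (((Real.arcsin (2 / s) : ℝ) : ℂ) * Complex.I))) z := by
    have hexp : HasFDerivAt Complex.exp
        ((((1 : ℂ →L[ℂ] ℂ).smulRight (Complex.exp
          (((Real.arcsin (2 / s) : ℝ) : ℂ) * Complex.I))).restrictScalars ℝ))
        (((Real.arcsin (2 / Complex.normSq (z - a)) : ℝ) : ℂ) * Complex.I) := by
      have := (Complex.hasDerivAt_exp ((((Real.arcsin (2 / Complex.normSq (z - a)) : ℝ) : ℂ))
        * Complex.I)).hasFDerivAt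
      exact this.restrictScalars ℝ
    have h1 := hexp.comp z hM
    refine h1.congr_fderiv ?_
    ext h
    simp [ContinuousLinearMap.smulRight_apply, Complex.real_smul]
    try push_cast
    try ring
  -- assemble
  have hW : HasFDerivAt (fun z : ℂ => z - a) (ContinuousLinearMap.id ℝ ℂ) z :=
    (hasFDerivAt_id z).sub_const a
  have hmul := (hW.mul hE).const_add a
  have h2 : tw a = fun z : ℂ => a + (z - a) * Complex.exp
      (((Real.arcsin (2 / Complex.normSq (z - a)) : ℝ) : ℂ) * Complex.I) := rfl
  rw [h2]
  refine hmul.congr_fderiv ?_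
  ext h
  simp [twD, DnormSq, Complex.real_smul, ContinuousLinearMap.smulRight_apply]
  simp only [hk_def, hs_def]
  push_cast
  ring


lemma det_twD (a z : ℂ) : (twD a z).det = 1 := by
  have h : (twD a z).det
      = Matrix.det (LinearMap.toMatrix Complex.basisOneI Complex.basisOneI
        ((twD a z : ℂ →ₗ[ℝ] ℂ))) := (LinearMap.det_toMatrix _ _).symm
  rw [h, Matrix.det_fin_two]
  simp only [LinearMap.toMatrix_apply, Complex.coe_basisOneI, Complex.coe_basisOneI_repr,
    Matrix.cons_val_zero, Matrix.cons_val_one, Matrix.head_cons,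
    ContinuousLinearMap.coe_coe, twD, DnormSq, ContinuousLinearMap.add_apply,
    ContinuousLinearMap.mul_apply', ContinuousLinearMap.smulRight_apply,
    ContinuousLinearMap.smul_apply, ContinuousLinearMap.coe_smul',
    Complex.reCLM_apply, Complex.imCLM_apply, Pi.smul_apply, smul_eq_mul,
    Complex.add_re, Complex.add_im, Complex.mul_re, Complex.mul_im,
    Complex.exp_ofReal_mul_I_re, Complex.exp_ofReal_mul_I_im,
    Complex.one_re, Complex.one_im, Complex.I_re, Complex.I_im,
    Complex.ofReal_re, Complex.ofReal_im, Complex.real_smul, Complex.ofReal_mul]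
  nlinarith [Real.sin_sq_add_cos_sq (Real.arcsin (2 / Complex.normSq (z - a)))]

lemma volume_tw_image (a : ℂ) {A : Set ℂ} (hA : MeasurableSet A)
    (h : ∀ z ∈ A, 4 < Complex.normSq (z - a)) : volume (tw a '' A) = volume A := by
  rw [← MeasureTheory.lintegral_abs_det_fderiv_eq_addHaar_image volume hA
      (fun z hz => ((hasFDerivAt_tw a z (h z hz)).hasFDerivWithinAt)) ((tw_injective a).injOn)]
  have h1 : ∀ z ∈ A, ENNReal.ofReal |(twD a z).det| = (1 : ENNReal) := by
    intro z _; rw [det_twD]; norm_num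
  rw [MeasureTheory.setLIntegral_congr_fun hA h1,
    MeasureTheory.setLIntegral_one]

lemma dist_tw_sq_le (a z : ℂ) (h16 : 16 ≤ Complex.normSq (z - a)) :
    dist (tw a z) z ^ 2 ≤ 8 / Complex.normSq (z - a) := by
  set s : ℝ := Complex.normSq (z - a) with hs_def
  have hs0 : 0 < s := by linarith
  have hu0 : (0 : ℝ) ≤ 2 / s := by positivity
  have hu1 : 2 / s ≤ 1 := by rw [div_le_one hs0]; linarith
  set φ : ℝ := Real.arcsin (2 / s) with hφ_def
  have hsin : Real.sin φ = 2 / s := Real.sin_arcsin (by linarith) hu1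
  have hcos : Real.cos φ = Real.sqrt (1 - (2 / s) ^ 2) := Real.cos_arcsin _
  have hcos0 : 0 ≤ Real.cos φ := by rw [hcos]; positivity
  have hcos1 : Real.cos φ ≤ 1 := Real.cos_le_one φ
  have hdiff : tw a z - z = (z - a) * (Complex.exp ((φ : ℝ) * Complex.I) - 1) := by
    simp only [tw, hφ_def, hs_def]; ring
  have hd : dist (tw a z) z ^ 2
      = s * Complex.normSq (Complex.exp ((φ : ℝ) * Complex.I) - 1) := by
    rw [Complex.dist_eq, hdiff, norm_mul, mul_pow, Complex.sq_norm, Complex.sq_norm, hs_def]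
  rw [hd]
  have hn : Complex.normSq (Complex.exp ((φ : ℝ) * Complex.I) - 1)
      = (Real.cos φ - 1) ^ 2 + (Real.sin φ) ^ 2 := by
    rw [Complex.normSq_apply, Complex.sub_re, Complex.sub_im,
      Complex.exp_ofReal_mul_I_re, Complex.exp_ofReal_mul_I_im, Complex.one_re,
      Complex.one_im]
    ring
  rw [hn]
  have hpyth := Real.sin_sq_add_cos_sq φ
  have key : (Real.cos φ - 1) ^ 2 + (Real.sin φ) ^ 2 ≤ 2 * (Real.sin φ) ^ 2 := by
    nlinarith
  have : s * ((Real.cos φ - 1) ^ 2 + Real.sin φ ^ 2) ≤ s * (2 * (2 / s) ^ 2) := by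
    rw [← hsin]
    exact mul_le_mul_of_nonneg_left (by rw [hsin] at key ⊢; exact key) hs0.le
  refine this.trans (le_of_eq ?_)
  field_simp
  ring

end TwistAux

lemma collinear_det2 {a b c : EuclideanSpace ℝ (Fin 2)}
    (h : Collinear ℝ ({a, b, c} : Set (EuclideanSpace ℝ (Fin 2)))) :
    det2 (b - a) (c - a) = 0 := by
  obtain ⟨v, hv⟩ := (collinear_iff_of_mem (Set.mem_insert a {b, c})).mp h
  obtain ⟨t1, ht1⟩ := hv b (by simp)
  obtain ⟨t2, ht2⟩ := hv c (by simp)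
  rw [ht1, ht2]
  have h1 : (t1 • v +ᵥ a) - a = t1 • v := by simp
  have h2 : (t2 • v +ᵥ a) - a = t2 • v := by simp
  rw [h1, h2]
  simp only [det2, PiLp.smul_apply, smul_eq_mul]
  ring

/-- Every unbounded measurable subset of the plane of positive Lebesgue measure contains
the three vertices of an isosceles triangle of area 1. -/
theorem isosceles_triangle_of_unbounded_pos_measure
    (S : Set (EuclideanSpace ℝ (Fin 2))) (hmeas : MeasurableSet S)
    (hunb : ¬ Bornology.IsBounded S) (hpos : 0 < volume S) :
    ∃ a b c : EuclideanSpace ℝ (Fin 2), a ∈ S ∧ b ∈ S ∧ c ∈ S ∧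
      dist a b = dist a c ∧
      ¬ Collinear ℝ ({a, b, c} : Set (EuclideanSpace ℝ (Fin 2))) ∧
      (1 / 2) * |det2 (b - a) (c - a)| = 1 := by
  classical
  set e : ℂ ≃ₗᵢ[ℝ] EuclideanSpace ℝ (Fin 2) := Complex.orthonormalBasisOneI.repr with he_def
  set S' : Set ℂ := ⇑e ⁻¹' S with hS'_def
  have hS'meas : MeasurableSet S' := hmeas.preimage e.continuous.measurable
  have hS'pos : 0 < volume S' := by
    rw [hS'_def,
      Complex.orthonormalBasisOneI.measurePreserving_repr.measure_preimage
        hmeas.nullMeasurableSet]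
    exact hpos
  have hS'unb : ¬ Bornology.IsBounded S' := by
    intro hb
    apply hunb
    have hSS : S = ⇑e '' S' := by rw [hS'_def, Set.image_preimage_eq _ e.surjective]
    rw [hSS]
    exact e.isometry.lipschitz.isBounded_image hb
  -- a Lebesgue density point of S'
  obtain ⟨p, hp, hpS'⟩ : ∃ p, Filter.Tendsto
      (fun r => volume (S' ∩ closedBall p r) / volume (closedBall p r))
      (nhdsWithin 0 (Set.Ioi 0)) (nhds 1) ∧ p ∈ S' := by
    have hae := Besicovitch.ae_tendsto_measure_inter_div (volume : Measure ℂ) S'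
    have hne : (MeasureTheory.ae ((volume : Measure ℂ).restrict S')).NeBot := by
      rw [MeasureTheory.ae_neBot]
      intro h0
      have h1 : (volume : Measure ℂ).restrict S' Set.univ = volume S' := by
        rw [MeasureTheory.Measure.restrict_apply_univ]
      rw [h0] at h1
      simp at h1
      exact hS'pos.ne' h1.symm
    exact (hae.and (MeasureTheory.ae_restrict_mem hS'meas)).exists
  -- choose a good radius δ
  obtain ⟨δ, hδratio, hδpos⟩ :=
    ((hp.eventually (eventually_gt_nhds
        (ENNReal.ofReal_lt_one.mpr (by norm_num : (7/8 : ℝ) < 1)))).and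
      eventually_mem_nhdsWithin).exists
  rw [Set.mem_Ioi] at hδpos
  set B := closedBall p δ with hB_def
  set ε : ℝ := δ / 10 with hε_def
  have hεpos : 0 < ε := by positivity
  have hB0 : volume B ≠ 0 := (measure_closedBall_pos volume p hδpos).ne'
  have hBtop : volume B ≠ ⊤ := measure_closedBall_lt_top.ne
  have hA_lb : ENNReal.ofReal (7/8) * volume B < volume (S' ∩ B) :=
    (ENNReal.lt_div_iff_mul_lt (Or.inl hB0) (Or.inl hBtop)).mp hδratio
  have hB' : volume (closedBall p (δ + ε)) ≤ ENNReal.ofReal (7/4) * volume B := by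
    rw [hB_def, MeasureTheory.Measure.addHaar_closedBall volume p (by positivity : (0:ℝ) ≤ δ + ε),
      MeasureTheory.Measure.addHaar_closedBall volume p hδpos.le, Complex.finrank_real_complex,
      ← mul_assoc, ← ENNReal.ofReal_mul (by norm_num : (0:ℝ) ≤ 7/4)]
    refine mul_le_mul_left (ENNReal.ofReal_le_ofReal ?_) _
    rw [hε_def]
    nlinarith [sq_nonneg δ]
  -- a far away point of S'
  obtain ⟨a, haS', hafar⟩ : ∃ a ∈ S', δ + 4 + Real.sqrt 8 / ε < dist a p := by
    by_contra hcon
    push_neg at hcon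
    exact hS'unb ((isBounded_iff_subset_closedBall p).mpr
      ⟨δ + 4 + Real.sqrt 8 / ε, fun x hx => mem_closedBall.mpr (hcon x hx)⟩)
  set A := S' ∩ B with hA_def
  have hAmeas : MeasurableSet A := hS'meas.inter measurableSet_closedBall
  have hkey : ∀ z ∈ closedBall p δ,
      16 ≤ Complex.normSq (z - a) ∧ 8 / Complex.normSq (z - a) ≤ ε ^ 2 := by
    intro z hz
    have hs8 : (0:ℝ) ≤ Real.sqrt 8 := Real.sqrt_nonneg 8
    have hsqrt8 : Real.sqrt 8 ^ 2 = 8 := Real.sq_sqrt (by norm_num)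
    have hd : 4 + Real.sqrt 8 / ε ≤ dist z a := by
      have h1 : dist a p ≤ dist a z + dist z p := dist_triangle a z p
      have h2 : dist z p ≤ δ := mem_closedBall.mp hz
      rw [dist_comm z a]
      linarith
    have hns : Complex.normSq (z - a) = dist z a ^ 2 := by
      rw [Complex.dist_eq, Complex.sq_norm]
    have hdε : (0:ℝ) ≤ Real.sqrt 8 / ε := by positivity
    constructor
    · rw [hns]; nlinarith
    · rw [hns, div_le_iff₀ (by nlinarith)]
      have hεd : Real.sqrt 8 ≤ ε * dist z a := by
        rw [← div_le_iff₀' hεpos]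
        linarith
      nlinarith
  have h4lt : ∀ z ∈ A, 4 < Complex.normSq (z - a) := fun z hz => by
    linarith [(hkey z hz.2).1]
  have himg : volume (tw a '' A) = volume A := volume_tw_image a hAmeas h4lt
  have hsub : tw a '' A ⊆ closedBall p (δ + ε) := by
    rintro _ ⟨z, hz, rfl⟩
    have hdisp2 : dist (tw a z) z ^ 2 ≤ ε ^ 2 :=
      (dist_tw_sq_le a z (hkey z hz.2).1).trans (hkey z hz.2).2
    have hdisp3 : dist (tw a z) z ≤ ε := by
      have := Real.sqrt_le_sqrt hdisp2
      rwa [Real.sqrt_sq dist_nonneg, Real.sqrt_sq hεpos.le] at this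
    have hzp := mem_closedBall.mp hz.2
    exact mem_closedBall.mpr ((dist_triangle (tw a z) z p).trans (by linarith))
  have hsubA : A ⊆ closedBall p (δ + ε) := fun z hz =>
    closedBall_subset_closedBall (by linarith) hz.2
  have hne2 : ((tw a '' A) ∩ A).Nonempty := by
    rw [Set.nonempty_iff_ne_empty]
    intro hcon
    have hdisj : Disjoint A (tw a '' A) := Set.disjoint_left.mpr
      (fun x hxA hxI => Set.eq_empty_iff_forall_notMem.mp hcon x ⟨hxI, hxA⟩)
    have hun : volume (A ∪ tw a '' A) = volume A + volume A := by
      rw [measure_union' hdisj hAmeas, himg]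
    have hle : volume A + volume A ≤ volume (closedBall p (δ + ε)) := by
      rw [← hun]
      exact measure_mono (Set.union_subset hsubA hsub)
    have hlt : volume (closedBall p (δ + ε)) < volume A + volume A := by
      refine (hB'.trans_lt ?_)
      have h74 : ENNReal.ofReal (7/4) * volume B
          = ENNReal.ofReal (7/8) * volume B + ENNReal.ofReal (7/8) * volume B := by
        rw [← add_mul, ← ENNReal.ofReal_add (by norm_num) (by norm_num)]
        norm_num
      rw [h74]
      exact ENNReal.add_lt_add hA_lb hA_lb
    exact absurd hle (not_le.mpr hlt)
  obtain ⟨x, hxI, hxA⟩ := hne2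
  obtain ⟨b, hbA, hbx⟩ := hxI
  set c : ℂ := tw a b with hc_def
  have hcS' : c ∈ S' := by
    have h := hxA.1
    rwa [← hbx] at h
  have hbS' : b ∈ S' := hbA.1
  have hs16 : 16 ≤ Complex.normSq (b - a) := (hkey b hbA.2).1
  have hns0 : Complex.normSq (b - a) ≠ 0 := by linarith
  have hc_sub : c - a = (b - a) *
      Complex.exp ((Real.arcsin (2 / Complex.normSq (b - a)) : ℝ) * Complex.I) := by
    simp [hc_def, tw]
  have hsin : Real.sin (Real.arcsin (2 / Complex.normSq (b - a)))
      = 2 / Complex.normSq (b - a) := by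
    refine Real.sin_arcsin (le_trans (by norm_num : (-1:ℝ) ≤ 0)
      (div_nonneg (by norm_num) (by linarith))) ?_
    rw [div_le_one (by linarith)]
    linarith
  -- coordinates of e
  have hcoord0 : ∀ w : ℂ, (e w : EuclideanSpace ℝ (Fin 2)) 0 = w.re := by
    intro w
    rw [he_def, Complex.orthonormalBasisOneI_repr_apply]
    rfl
  have hcoord1 : ∀ w : ℂ, (e w : EuclideanSpace ℝ (Fin 2)) 1 = w.im := by
    intro w
    rw [he_def, Complex.orthonormalBasisOneI_repr_apply]
    rfl
  have hdet : det2 (e b - e a) (e c - e a) = 2 := by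
    rw [← map_sub, ← map_sub]
    rw [det2, hcoord0, hcoord1, hcoord0, hcoord1, hc_sub, Complex.mul_re, Complex.mul_im,
      Complex.exp_ofReal_mul_I_re, Complex.exp_ofReal_mul_I_im, hsin]
    have hns : Complex.normSq (b - a) = (b.re - a.re) ^ 2 + (b.im - a.im) ^ 2 := by
      rw [Complex.normSq_apply, Complex.sub_re, Complex.sub_im]; ring
    field_simp
    linear_combination (norm := skip) -2 * hns
    simp only [Complex.sub_re, Complex.sub_im, Complex.normSq_apply]
    ring
  refine ⟨e a, e b, e c, haS', hbS', hcS', ?_, ?_, ?_⟩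
  · rw [e.dist_map, e.dist_map, Complex.dist_eq, Complex.dist_eq]
    have h1 : Complex.normSq (a - b) = Complex.normSq (a - c) := by
      rw [show a - b = -(b - a) by ring, show a - c = -(c - a) by ring,
        Complex.normSq_neg, Complex.normSq_neg, hc_def, normSq_tw_sub]
    rw [Complex.norm_def, Complex.norm_def, h1]
  · intro hcol
    have := collinear_det2 hcol
    rw [hdet] at this
    norm_num at this
  · rw [hdet]
    norm_num
end

section
/- Let S ⊆ ℝ² be a measurable set which is unbounded and has positive Lebesgue measure. Then S contains the three vertices of a right-angled triangle of area 1; that is, there exist points a, b, c ∈ S such that the inner product ⟨b − a, c − a⟩ = 0, the points are not collinear, and (1/2)·|det(b − a, c − a)| = 1. -/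
open MeasureTheory Metric RealInnerProductSpace Module Filter Topology
open scoped ENNReal NNReal

namespace RightTriAux

abbrev E2 := EuclideanSpace ℝ (Fin 2)

noncomputable def rot (u : E2) : E2 := (WithLp.equiv 2 (Fin 2 → ℝ)).symm ![-(u 1), u 0]

@[simp] lemma rot_apply0 (u : E2) : rot u 0 = -(u 1) := rfl
@[simp] lemma rot_apply1 (u : E2) : rot u 1 = u 0 := rfl

lemma inner_formula (u v : E2) : ⟪u, v⟫ = u 0 * v 0 + u 1 * v 1 := by
  simp [PiLp.inner_apply, Fin.sum_univ_two, RCLike.inner_apply, mul_comm]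

lemma norm_sq_formula (u : E2) : ‖u‖ ^ 2 = u 0 ^ 2 + u 1 ^ 2 := by
  rw [← real_inner_self_eq_norm_sq, inner_formula]; ring

lemma rot_sub (u v : E2) : rot (u - v) = rot u - rot v := by
  ext i; fin_cases i <;> (simp [rot]; try ring)

lemma norm_rot (u : E2) : ‖rot u‖ = ‖u‖ := by
  have h : ‖rot u‖ ^ 2 = ‖u‖ ^ 2 := by
    rw [norm_sq_formula, norm_sq_formula]; simp; ring
  nlinarith [norm_nonneg u, norm_nonneg (rot u)]

lemma inner_rot (u : E2) : ⟪u, rot u⟫ = 0 := by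
  rw [inner_formula]; simp; ring

lemma det2_smul (u v : E2) (t : ℝ) : det2 u (t • v) = t * det2 u v := by
  simp [det2, PiLp.smul_apply, smul_eq_mul]; ring

lemma det2_rot (u : E2) : det2 u (rot u) = ‖u‖ ^ 2 := by
  simp [det2, norm_sq_formula]; ring

noncomputable def gg (q a : E2) : E2 := (2 / ‖q - a‖ ^ 2) • rot (q - a)
noncomputable def ff (q a : E2) : E2 := a + gg q a

lemma norm_gg (q a : E2) : ‖gg q a‖ = 2 / ‖q - a‖ := by
  rw [gg, norm_smul, norm_rot, Real.norm_eq_abs]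
  rcases eq_or_ne (‖q - a‖) 0 with h | h
  · simp [h]
  · have h0 : 0 < ‖q - a‖ := (norm_nonneg _).lt_of_ne (Ne.symm h)
    rw [abs_of_pos (by positivity)]
    field_simp

lemma gg_lip {m : ℝ} (hm : 0 < m) (q x y : E2) (hx : m ≤ ‖q - x‖) (hy : m ≤ ‖q - y‖) :
    ‖gg q x - gg q y‖ ≤ 6 / m ^ 2 * ‖x - y‖ := by
  set w := q - x with hw
  set w' := q - y with hw'
  have ha : (0:ℝ) < ‖w‖ := lt_of_lt_of_le hm hx
  have hb : (0:ℝ) < ‖w'‖ := lt_of_lt_of_le hm hy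
  have hd : w - w' = y - x := by rw [hw, hw']; abel
  have hnd : ‖w - w'‖ = ‖x - y‖ := by rw [hd, norm_sub_rev]
  have key : gg q x - gg q y
      = (2 / ‖w‖ ^ 2) • (rot w - rot w') + (2 / ‖w‖ ^ 2 - 2 / ‖w'‖ ^ 2) • rot w' := by
    rw [gg, gg, ← hw, ← hw']
    module
  rw [key, ← rot_sub]
  have h1 : ‖(2 / ‖w‖ ^ 2) • rot (w - w')‖ = 2 / ‖w‖ ^ 2 * ‖x - y‖ := by
    rw [norm_smul, norm_rot, hnd, Real.norm_eq_abs, abs_of_pos (by positivity)]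
  have habs : |‖w‖ - ‖w'‖| ≤ ‖x - y‖ := by
    rw [← hnd]; exact abs_norm_sub_norm_le w w'
  have h2 : ‖(2 / ‖w‖ ^ 2 - 2 / ‖w'‖ ^ 2) • rot w'‖
      ≤ (2 / (‖w‖ * ‖w'‖) + 2 / ‖w‖ ^ 2) * ‖x - y‖ := by
    rw [norm_smul, norm_rot, Real.norm_eq_abs]
    have heq : |2 / ‖w‖ ^ 2 - 2 / ‖w'‖ ^ 2|
        = 2 * (‖w'‖ + ‖w‖) * |‖w'‖ - ‖w‖| / (‖w‖^2 * ‖w'‖^2) := by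
      rw [div_sub_div _ _ (by positivity) (by positivity)]
      rw [abs_div, abs_of_pos (show (0:ℝ) < ‖w‖^2 * ‖w'‖^2 by positivity)]
      congr 1
      rw [show (2:ℝ) * ‖w'‖^2 - ‖w‖^2 * 2 = (2 * (‖w'‖ + ‖w‖)) * (‖w'‖ - ‖w‖) by ring, abs_mul]
      rw [abs_of_pos (by positivity)]
    rw [heq]
    rw [abs_sub_comm] at habs
    rw [div_mul_eq_mul_div, div_le_iff₀ (by positivity)]
    have h3 : 2 * (‖w'‖ + ‖w‖) * |‖w'‖ - ‖w‖| * ‖w'‖ ≤ 2 * (‖w'‖ + ‖w‖) * ‖x - y‖ * ‖w'‖ := by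
      gcongr
    calc 2 * (‖w'‖ + ‖w‖) * |‖w'‖ - ‖w‖| * ‖w'‖ ≤ 2 * (‖w'‖ + ‖w‖) * ‖x - y‖ * ‖w'‖ := h3
      _ = (2 / (‖w‖ * ‖w'‖) + 2 / ‖w‖ ^ 2) * ‖x - y‖ * (‖w‖ ^ 2 * ‖w'‖ ^ 2) := by
          field_simp; ring
  calc ‖(2 / ‖w‖ ^ 2) • rot (w - w') + (2 / ‖w‖ ^ 2 - 2 / ‖w'‖ ^ 2) • rot w'‖
      ≤ ‖(2 / ‖w‖ ^ 2) • rot (w - w')‖ + ‖(2 / ‖w‖ ^ 2 - 2 / ‖w'‖ ^ 2) • rot w'‖ :=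
        norm_add_le _ _
    _ ≤ 2 / ‖w‖ ^ 2 * ‖x - y‖ + (2 / (‖w‖ * ‖w'‖) + 2 / ‖w‖ ^ 2) * ‖x - y‖ := by
        rw [h1]; gcongr
    _ ≤ 6 / m ^ 2 * ‖x - y‖ := by
        have e1 : 2 / ‖w‖ ^ 2 ≤ 2 / m ^ 2 := by gcongr
        have e2 : 2 / (‖w‖ * ‖w'‖) ≤ 2 / m ^ 2 := by
          apply div_le_div_of_nonneg_left (by norm_num) (by positivity)
          calc m ^ 2 = m * m := sq m
            _ ≤ ‖w‖ * ‖w'‖ := by gcongr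
        have hsum : 2 / ‖w‖ ^ 2 + (2 / (‖w‖ * ‖w'‖) + 2 / ‖w‖ ^ 2) ≤ 6 / m ^ 2 := by
          have h6 : (6:ℝ) / m ^ 2 = 2 / m^2 + (2/m^2 + 2/m^2) := by ring
          rw [h6]; gcongr
        calc 2 / ‖w‖ ^ 2 * ‖x - y‖ + (2 / (‖w‖ * ‖w'‖) + 2 / ‖w‖ ^ 2) * ‖x - y‖
            = (2 / ‖w‖ ^ 2 + (2 / (‖w‖ * ‖w'‖) + 2 / ‖w‖ ^ 2)) * ‖x - y‖ := by ring
          _ ≤ 6 / m ^ 2 * ‖x - y‖ := by gcongr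

lemma volume_eq_smul_hausdorff :
    ∃ c : ℝ≥0, c ≠ 0 ∧ (μH[finrank ℝ E2] : Measure E2) = c • (volume : Measure E2) := by
  refine ⟨Measure.addHaarScalarFactor (μH[finrank ℝ E2] : Measure E2) volume, ?_, ?_⟩
  · exact (Measure.addHaarScalarFactor_pos_of_isAddHaarMeasure _ _).ne'
  · exact Measure.isAddLeftInvariant_eq_smul _ _

lemma measure_le_image (K : Set E2) (F : E2 → E2) (L : ℝ≥0)
    (hanti : ∀ x ∈ K, ∀ y ∈ K, dist x y ≤ L * dist (F x) (F y)) :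
    volume K ≤ (L : ℝ≥0∞) ^ (finrank ℝ E2 : ℝ) * volume (F '' K) := by
  have hinj : Set.InjOn F K := by
    intro x hx y hy hxy
    have h := hanti x hx y hy
    rw [hxy] at h
    simp at h
    exact dist_le_zero.mp (by simpa using h)
  set h := Function.invFunOn F K with hh
  have hmem : ∀ u ∈ F '' K, h u ∈ K ∧ F (h u) = u := by
    rintro u ⟨x, hx, rfl⟩
    exact ⟨Function.invFunOn_mem ⟨x, hx, rfl⟩, Function.invFunOn_eq ⟨x, hx, rfl⟩⟩
  have hlip : LipschitzOnWith L h (F '' K) := by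
    rw [lipschitzOnWith_iff_dist_le_mul]
    intro u hu v hv
    obtain ⟨hu1, hu2⟩ := hmem u hu
    obtain ⟨hv1, hv2⟩ := hmem v hv
    have h := hanti (h u) hu1 (h v) hv1
    rw [hu2, hv2] at h
    exact h
  have himg : h '' (F '' K) = K := by
    apply Set.Subset.antisymm
    · rintro y ⟨u, hu, rfl⟩; exact (hmem u hu).1
    · intro x hx
      refine ⟨F x, Set.mem_image_of_mem _ hx, ?_⟩
      exact hinj (hmem _ (Set.mem_image_of_mem _ hx)).1 hx (hmem _ (Set.mem_image_of_mem _ hx)).2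
  have hH : (μH[finrank ℝ E2] : Measure E2) K ≤
      (L : ℝ≥0∞) ^ (finrank ℝ E2 : ℝ) * (μH[finrank ℝ E2] : Measure E2) (F '' K) := by
    conv_lhs => rw [← himg]
    exact hlip.hausdorffMeasure_image_le (by positivity)
  obtain ⟨c, hc, hceq⟩ := volume_eq_smul_hausdorff
  rw [hceq] at hH
  simp only [Measure.smul_apply, ENNReal.smul_def, smul_eq_mul] at hH
  rw [mul_left_comm] at hH
  exact (ENNReal.mul_le_mul_iff_right (by exact_mod_cast hc) ENNReal.coe_ne_top).mp hH

lemma not_collinear_of_perp {a b c : E2} (hab : b ≠ a) (hac : c ≠ a)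
    (hperp : ⟪b - a, c - a⟫ = 0) : ¬ Collinear ℝ ({a, b, c} : Set E2) := by
  intro h
  rw [collinear_iff_of_mem (Set.mem_insert a {b, c})] at h
  obtain ⟨v, hv⟩ := h
  obtain ⟨t₁, ht₁⟩ := hv b (by simp)
  obtain ⟨t₂, ht₂⟩ := hv c (by simp)
  have hb : b - a = t₁ • v := by rw [ht₁]; simp
  have hc : c - a = t₂ • v := by rw [ht₂]; simp
  rw [hb, hc, real_inner_smul_left, real_inner_smul_right] at hperp
  have hvne : v ≠ 0 := by
    rintro rfl; apply hab; rw [← sub_eq_zero, hb, smul_zero]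
  have ht₁ne : t₁ ≠ 0 := by rintro rfl; apply hab; rw [← sub_eq_zero, hb, zero_smul]
  have ht₂ne : t₂ ≠ 0 := by rintro rfl; apply hac; rw [← sub_eq_zero, hc, zero_smul]
  rcases mul_eq_zero.mp hperp with h' | h'
  · exact ht₁ne h'
  · rcases mul_eq_zero.mp h' with h'' | h''
    · exact ht₂ne h''
    · exact hvne (inner_self_eq_zero.mp h'')

end RightTriAux

open RightTriAux

/-- Every unbounded measurable subset of the plane of positive Lebesgue measure contains
the three vertices of a right-angled triangle of area 1. -/
theorem right_triangle_of_unbounded_pos_measure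
    (S : Set (EuclideanSpace ℝ (Fin 2))) (hmeas : MeasurableSet S)
    (hunb : ¬ Bornology.IsBounded S) (hpos : 0 < volume S) :
    ∃ a b c : EuclideanSpace ℝ (Fin 2), a ∈ S ∧ b ∈ S ∧ c ∈ S ∧
      ⟪b - a, c - a⟫ = 0 ∧
      ¬ Collinear ℝ ({a, b, c} : Set (EuclideanSpace ℝ (Fin 2))) ∧
      (1 / 2) * |det2 (b - a) (c - a)| = 1 := by
  classical
  -- density point
  have hae := Besicovitch.ae_tendsto_measure_inter_div_of_measurableSet
    (volume : Measure E2) hmeas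
  obtain ⟨x₀, hx₀S, hx₀⟩ :=
    Measure.exists_mem_of_measure_ne_zero_of_ae hpos.ne' (ae_restrict_of_ae hae)
  rw [Set.indicator_of_mem hx₀S] at hx₀
  simp only [Pi.one_apply] at hx₀
  -- choose radius r
  have hev : ∀ᶠ r in 𝓝[>] (0:ℝ),
      ENNReal.ofReal (99/100) <
        volume (S ∩ closedBall x₀ r) / volume (closedBall x₀ r) := by
    apply hx₀.eventually
    apply eventually_gt_nhds
    rw [show (1 : ℝ≥0∞) = ENNReal.ofReal 1 by simp]
    exact ENNReal.ofReal_lt_ofReal_iff_of_nonneg (by norm_num) |>.mpr (by norm_num)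
  obtain ⟨r, hratio, hrpos⟩ := (hev.and self_mem_nhdsWithin).exists
  set B : Set E2 := closedBall x₀ r with hB
  have hBne : volume B ≠ 0 := (measure_closedBall_pos _ _ hrpos).ne'
  have hBfin : volume B ≠ ⊤ := measure_closedBall_lt_top.ne
  have hSB : ENNReal.ofReal (99/100) * volume B ≤ volume (S ∩ B) := by
    have := (ENNReal.lt_div_iff_mul_lt (Or.inl hBne) (Or.inl hBfin)).mp hratio
    exact this.le
  -- compact subset K
  have hSBfin : volume (S ∩ B) ≠ ⊤ :=
    (lt_of_le_of_lt (measure_mono Set.inter_subset_right) measure_closedBall_lt_top).ne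
  obtain ⟨K, hKsub, hKcomp, hKmeas⟩ :=
    (hmeas.inter measurableSet_closedBall).exists_isCompact_lt_add hSBfin
      (ε := ENNReal.ofReal (3/100) * volume B)
      (mul_ne_zero (ENNReal.ofReal_pos.mpr (by norm_num)).ne' hBne)
  have hK96 : ENNReal.ofReal (96/100) * volume B ≤ volume K := by
    have h1 : ENNReal.ofReal (99/100) * volume B
        ≤ volume K + ENNReal.ofReal (3/100) * volume B := le_trans hSB hKmeas.le
    have h2 : ENNReal.ofReal (99/100) * volume B
        = ENNReal.ofReal (96/100) * volume B + ENNReal.ofReal (3/100) * volume B := by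
      rw [← add_mul, ← ENNReal.ofReal_add (by norm_num) (by norm_num)]
      norm_num
    rw [h2] at h1
    exact (ENNReal.add_le_add_iff_right
      (ENNReal.mul_ne_top ENNReal.ofReal_ne_top hBfin)).mp h1
  -- choose m and the far point q
  obtain ⟨m, hm⟩ : ∃ m : ℝ, m = 4 + 200 / r := ⟨_, rfl⟩
  have hm0 : (0:ℝ) < m := by rw [hm]; positivity
  have hm4 : (4:ℝ) ≤ m := by
    rw [hm]
    have : (0:ℝ) < 200 / r := by positivity
    linarith
  have hmr : 2 / m ≤ r / 100 := by
    have h200 : (200:ℝ) / r ≤ m := by rw [hm]; linarith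
    have h1 : 2 / m ≤ 2 / (200 / r) := by
      apply div_le_div_of_nonneg_left (by norm_num) (by positivity) h200
    have h2 : (2:ℝ) / (200 / r) = r / 100 := by
      field_simp
      ring
    linarith
  obtain ⟨q, hqS, hq⟩ : ∃ q ∈ S, r + m ≤ dist q x₀ := by
    by_contra hcon
    push_neg at hcon
    exact hunb ((isBounded_ball (x := x₀) (r := r + m)).subset
      (fun z hz => mem_ball.mpr (hcon z hz)))
  -- distance bound on the ball
  have hfar : ∀ x ∈ B, m ≤ ‖q - x‖ := by
    intro x hx
    have hx' : dist x x₀ ≤ r := mem_closedBall.mp hx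
    have htri : dist q x₀ ≤ dist q x + dist x x₀ := dist_triangle _ _ _
    have : dist q x = ‖q - x‖ := dist_eq_norm _ _
    linarith
  -- contraction bound for gg
  have hglip : ∀ x ∈ B, ∀ y ∈ B, ‖gg q x - gg q y‖ ≤ (1/2) * ‖x - y‖ := by
    intro x hx y hy
    have h1 := gg_lip hm0 q x y (hfar x hx) (hfar y hy)
    have h2 : 6 / m ^ 2 ≤ 1/2 := by
      rw [div_le_iff₀ (by positivity)]
      nlinarith
    calc ‖gg q x - gg q y‖ ≤ 6 / m ^ 2 * ‖x - y‖ := h1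
      _ ≤ (1/2) * ‖x - y‖ := by
          apply mul_le_mul_of_nonneg_right h2 (norm_nonneg _)
  -- f is anti-Lipschitz with constant 2 on B
  have hanti : ∀ x ∈ B, ∀ y ∈ B, dist x y ≤ (2:ℝ≥0) * dist (ff q x) (ff q y) := by
    intro x hx y hy
    have hid : x - y = (ff q x - ff q y) - (gg q x - gg q y) := by
      rw [ff, ff]; abel
    have h1 : ‖x - y‖ ≤ ‖ff q x - ff q y‖ + ‖gg q x - gg q y‖ := by
      calc ‖x - y‖ = ‖(ff q x - ff q y) - (gg q x - gg q y)‖ := by rw [← hid]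
        _ ≤ ‖ff q x - ff q y‖ + ‖gg q x - gg q y‖ := norm_sub_le _ _
    have h2 := hglip x hx y hy
    rw [dist_eq_norm, dist_eq_norm]
    push_cast
    linarith
  -- f is Lipschitz on B, hence continuous
  have hflip : ∀ x ∈ B, ∀ y ∈ B, dist (ff q x) (ff q y) ≤ 2 * dist x y := by
    intro x hx y hy
    have hid : ff q x - ff q y = (x - y) + (gg q x - gg q y) := by
      rw [ff, ff]; abel
    have h2 := hglip x hx y hy
    rw [dist_eq_norm, dist_eq_norm, hid]
    calc ‖(x - y) + (gg q x - gg q y)‖ ≤ ‖x - y‖ + ‖gg q x - gg q y‖ := norm_add_le _ _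
      _ ≤ 2 * ‖x - y‖ := by
          have := norm_nonneg (x - y)
          linarith
  have hfcont : ContinuousOn (ff q) B := by
    apply LipschitzOnWith.continuousOn (K := 2)
    rw [lipschitzOnWith_iff_dist_le_mul]
    intro x hx y hy
    simpa using hflip x hx y hy
  have hKB : K ⊆ B := hKsub.trans Set.inter_subset_right
  -- the image set X
  set X : Set E2 := ff q '' K with hX
  have hXcomp : IsCompact X := hKcomp.image_of_continuousOn (hfcont.mono hKB)
  -- measure lower bound for X
  have hKX : volume K ≤ 4 * volume X := by
    have h := measure_le_image K (ff q) 2 (fun x hx y hy => hanti x (hKB hx) y (hKB hy))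
    have h4 : ((2:ℝ≥0) : ℝ≥0∞) ^ ((finrank ℝ E2 : ℕ) : ℝ) = 4 := by
      rw [show (finrank ℝ E2) = 2 from finrank_euclideanSpace_fin]
      rw [show (((2:ℕ):ℝ)) = ((2:ℕ):ℝ) from rfl]
      rw [ENNReal.rpow_natCast]
      norm_num
    rw [h4] at h
    exact h
  -- B' and its measure
  obtain ⟨r', hr'⟩ : ∃ r' : ℝ, r' = r + 2 / m := ⟨_, rfl⟩
  set B' : Set E2 := closedBall x₀ r' with hB'
  have hr'pos : 0 < r' := by rw [hr']; positivity
  have hXB' : X ⊆ B' := by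
    rintro _ ⟨x, hx, rfl⟩
    have hx' : dist x x₀ ≤ r := mem_closedBall.mp (hKB hx)
    have hd : dist (ff q x) x = ‖gg q x‖ := by
      rw [dist_eq_norm, ff]
      congr 1
      abel
    have hgb : ‖gg q x‖ ≤ 2 / m := by
      rw [norm_gg]
      apply div_le_div_of_nonneg_left (by norm_num) hm0 (hfar x (hKB hx))
    have := dist_triangle (ff q x) x x₀
    rw [mem_closedBall]
    rw [hd] at this
    linarith
  have hBB' : B ⊆ B' := closedBall_subset_closedBall
    (by rw [hr']; have h2 : (0:ℝ) < 2/m := div_pos (by norm_num) hm0; linarith)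
  have hB'le : volume B' ≤ ENNReal.ofReal (110/100) * volume B := by
    rw [hB', hB, Measure.addHaar_closedBall _ _ hr'pos.le,
      Measure.addHaar_closedBall _ _ hrpos.le]
    rw [show (finrank ℝ E2) = 2 from finrank_euclideanSpace_fin]
    rw [← mul_assoc, ← ENNReal.ofReal_mul (by norm_num)]
    apply mul_le_mul_left
    apply ENNReal.ofReal_le_ofReal
    have h101 : r' ≤ (101/100) * r := by
      rw [hr']
      linarith
    nlinarith
  -- the set Y
  set Y : Set E2 := S ∩ B' with hY
  have hYmeas : MeasurableSet Y := hmeas.inter measurableSet_closedBall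
  have hYge : ENNReal.ofReal (99/100) * volume B ≤ volume Y := by
    refine le_trans hSB (measure_mono ?_)
    exact Set.inter_subset_inter_right _ hBB'
  have hXge : ENNReal.ofReal (24/100) * volume B ≤ volume X := by
    have h4 : (4:ℝ≥0∞) * (ENNReal.ofReal (24/100) * volume B) ≤ 4 * volume X := by
      rw [← mul_assoc]
      rw [show (4:ℝ≥0∞) * ENNReal.ofReal (24/100) = ENNReal.ofReal (96/100) by
        rw [show (4:ℝ≥0∞) = ENNReal.ofReal 4 by simp, ← ENNReal.ofReal_mul (by norm_num)]
        norm_num]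
      exact le_trans hK96 hKX
    exact (ENNReal.mul_le_mul_iff_right (by norm_num) (by norm_num)).mp h4
  -- X ∩ Y is nonempty
  have hXY : (X ∩ Y).Nonempty := by
    apply nonempty_of_measure_ne_zero (μ := volume)
    intro h0
    have hie := measure_union_add_inter X hYmeas (μ := volume)
    rw [h0, add_zero] at hie
    have hunion : volume (X ∪ Y) ≤ volume B' :=
      measure_mono (Set.union_subset hXB' (Set.inter_subset_right))
    have hsum : ENNReal.ofReal (123/100) * volume B ≤ volume X + volume Y := by
      rw [show ENNReal.ofReal (123/100) = ENNReal.ofReal (24/100) + ENNReal.ofReal (99/100) by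
        rw [← ENNReal.ofReal_add (by norm_num) (by norm_num)]; norm_num, add_mul]
      exact add_le_add hXge hYge
    have hfinal : ENNReal.ofReal (123/100) * volume B ≤ ENNReal.ofReal (110/100) * volume B := by
      calc ENNReal.ofReal (123/100) * volume B ≤ volume X + volume Y := hsum
        _ = volume (X ∪ Y) := hie.symm
        _ ≤ volume B' := hunion
        _ ≤ ENNReal.ofReal (110/100) * volume B := hB'le
    have := (ENNReal.mul_le_mul_iff_left hBne hBfin).mp hfinal
    have := ENNReal.ofReal_le_ofReal_iff (by norm_num) |>.mp this
    norm_num at this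
  obtain ⟨z, hzX, hzY⟩ := hXY
  obtain ⟨a, haK, hfa⟩ := hzX
  have haS : a ∈ S := (hKsub haK).1
  have hcS : ff q a ∈ S := by rw [hfa]; exact hzY.1
  -- geometry
  have hqa : q ≠ a := by
    intro h
    have h1 : dist a x₀ ≤ r := mem_closedBall.mp (hKB haK)
    rw [← h] at h1
    linarith
  have hu0 : (0:ℝ) < ‖q - a‖ := lt_of_lt_of_le hm0 (hfar a (hKB haK))
  have hca : ff q a - a = gg q a := by rw [ff]; abel
  refine ⟨a, q, ff q a, haS, hqS, hcS, ?_, ?_, ?_⟩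
  · rw [hca, gg, real_inner_smul_right, inner_rot, mul_zero]
  · apply not_collinear_of_perp hqa
    · intro h
      have := norm_gg q a
      rw [← hca, h] at this
      simp at this
      have : (0:ℝ) < 2 / ‖q - a‖ := by positivity
      rw [← norm_gg q a, ← hca, h] at this
      simp at this
    · rw [hca, gg, real_inner_smul_right, inner_rot, mul_zero]
  · rw [hca, gg, det2_smul, det2_rot]
    rw [show 2 / ‖q - a‖ ^ 2 * ‖q - a‖ ^ 2 = 2 by field_simp]
    norm_num
end

section
/- Let r > √2, θ ∈ ℝ, φ(r) = arcsin(2/r²), p = (r·cos θ, r·sin θ), q = (r·cos(θ + φ(r)), r·sin(θ + φ(r))), and let m = (p + q)/2 be the midpoint of p and q. Then ⟨0 − m, p − m⟩ = 0 and (1/2)·|det(p − m, 0 − m)| = 1/2; in other words, the triangle with vertices 0, p, m is a right-angled triangle (with the right angle at m) of area 1/2. -/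
open MeasureTheory Metric Real RealInnerProductSpace

/-- For `r > √2`, `φ(r) = arcsin(2/r²)`, `p = (r cos θ, r sin θ)`,
`q = (r cos (θ + φ(r)), r sin (θ + φ(r)))` and `m = (p + q)/2`, the triangle with vertices
`0`, `p`, `m` has a right angle at `m` and area `1/2`. -/
theorem right_triangle_half_area_of_midpoint (r θ : ℝ) (hr : Real.sqrt 2 < r)
    (φ : ℝ) (hφ : φ = Real.arcsin (2 / r ^ 2))
    (p q m : EuclideanSpace ℝ (Fin 2))
    (hp : p = ![r * Real.cos θ, r * Real.sin θ])
    (hq : q = ![r * Real.cos (θ + φ), r * Real.sin (θ + φ)])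
    (hm : m = midpoint ℝ p q) :
    ⟪(0 : EuclideanSpace ℝ (Fin 2)) - m, p - m⟫ = 0 ∧
    (1 / 2) * |det2 (p - m) ((0 : EuclideanSpace ℝ (Fin 2)) - m)| = 1 / 2 := by
  have hr0 : (0:ℝ) < r := lt_trans (Real.sqrt_pos.mpr (by norm_num)) hr
  have hr2 : 2 < r ^ 2 := by
    nlinarith [Real.sq_sqrt (by norm_num : (2:ℝ) ≥ 0), Real.sqrt_nonneg 2]
  have hsin : Real.sin φ = 2 / r ^ 2 := by
    rw [hφ, Real.sin_arcsin]
    · rw [le_div_iff₀ (by positivity)]; nlinarith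
    · rw [div_le_one (by positivity)]; linarith
  have h1 := Real.sin_sq_add_cos_sq θ
  have h2 := Real.sin_sq_add_cos_sq (θ + φ)
  have hsin' : Real.sin φ * r ^ 2 = 2 := by
    field_simp at hsin; linarith
  have hp0 : p 0 = r * Real.cos θ := by rw [hp]; rfl
  have hp1 : p 1 = r * Real.sin θ := by rw [hp]; rfl
  have hq0 : q 0 = r * (Real.cos θ * Real.cos φ - Real.sin θ * Real.sin φ) := by
    rw [hq]; show r * Real.cos (θ + φ) = _; rw [Real.cos_add]
  have hq1 : q 1 = r * (Real.sin θ * Real.cos φ + Real.cos θ * Real.sin φ) := by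
    rw [hq]; show r * Real.sin (θ + φ) = _; rw [Real.sin_add]
  have hm' : ∀ i, m i = (p i + q i) / 2 := by
    intro i
    rw [hm, midpoint_eq_smul_add]
    simp [PiLp.smul_apply, PiLp.add_apply, invOf_eq_inv, smul_eq_mul]
    ring
  have hcos2 : Real.sin (θ + φ) ^ 2 + Real.cos (θ + φ) ^ 2 = 1 := h2
  constructor
  · simp only [PiLp.inner_apply, Fin.sum_univ_two, PiLp.sub_apply, PiLp.zero_apply,
      RCLike.inner_apply, conj_trivial, hm', hp0, hp1, hq0, hq1]
    linear_combination (r ^ 2 / 4) * (Real.sin θ ^ 2 + Real.cos θ ^ 2) * Real.sin_sq_add_cos_sq φ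
  · have hdet : det2 (p - m) ((0 : EuclideanSpace ℝ (Fin 2)) - m) = -1 := by
      simp only [det2, PiLp.sub_apply, PiLp.zero_apply, hm', hp0, hp1, hq0, hq1]
      linear_combination (-(Real.sin θ ^ 2 + Real.cos θ ^ 2) / 2) * hsin' - h1
    rw [hdet]
    norm_num
end

section
/- Let φ(r) = arcsin(2/r²) and, for p ∈ ℝ² with ‖p‖ > 100, write p = (r·cos θ, r·sin θ) and define g(p) = (p + f(p))/2 = (r·cos(φ(r)/2)·cos(θ + φ(r)/2), r·cos(φ(r)/2)·sin(θ + φ(r)/2)), where f(p) = (r·cos(θ + φ(r)), r·sin(θ + φ(r))). Then g is injective on {p : ‖p‖ > 100}, and for every measurable set E ⊆ {p ∈ ℝ² : ‖p‖ > 100} the image g(E) is measurable and μ(g(E)) ≥ (4/5)·μ(E). -/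
open MeasureTheory Metric Real ENNReal

local notation "Esp" => EuclideanSpace ℝ (Fin 2)

noncomputable def Tt (p : Esp) : ℝ := p 0 * p 0 + p 1 * p 1
noncomputable def cc (t : ℝ) : ℝ := Real.sqrt (1 - (2/t)^2)
noncomputable def GG (p : Esp) : Esp :=
  !₂[ (1/2) * (p 0 * (1 + cc (Tt p)) - p 1 * (2 / Tt p)),
     (1/2) * (p 0 * (2 / Tt p) + p 1 * (1 + cc (Tt p))) ]

lemma normsq (p : Esp) : ‖p‖^2 = Tt p := by
  rw [EuclideanSpace.norm_eq]
  rw [Real.sq_sqrt (by positivity)]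
  simp [Tt, Fin.sum_univ_two, sq_abs]
  ring

-- polar representation
lemma polar (p : Esp) (hp : p ≠ 0) : ∃ θ : ℝ, p = !₂[‖p‖ * Real.cos θ, ‖p‖ * Real.sin θ] := by
  set z : ℂ := ⟨p 0, p 1⟩ with hz
  have hz0 : z ≠ 0 := by
    intro h
    apply hp
    have h0 : p 0 = 0 := congrArg Complex.re h
    have h1 : p 1 = 0 := congrArg Complex.im h
    ext i; fin_cases i <;> simpa
  have habs : ‖z‖ = ‖p‖ := by
    rw [Complex.norm_def, Complex.normSq_apply, EuclideanSpace.norm_eq]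
    simp [hz, Fin.sum_univ_two, sq_abs, sq]
  refine ⟨z.arg, ?_⟩
  ext i; fin_cases i
  · simpa [habs] using (Complex.norm_mul_cos_arg z).symm
  · simpa [habs] using (Complex.norm_mul_sin_arg z).symm

lemma Tt_polar (r θ : ℝ) : Tt !₂[r * Real.cos θ, r * Real.sin θ] = r^2 := by
  simp [Tt]
  nlinarith [sin_sq_add_cos_sq θ]

lemma key (r θ : ℝ) (hr : 100 < r) :
    (!₂[r * Real.cos (Real.arcsin (2 / r ^ 2) / 2) *
            Real.cos (θ + Real.arcsin (2 / r ^ 2) / 2),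
          r * Real.cos (Real.arcsin (2 / r ^ 2) / 2) *
            Real.sin (θ + Real.arcsin (2 / r ^ 2) / 2)] : Esp)
      = GG !₂[r * Real.cos θ, r * Real.sin θ] := by
  have hr0 : (0:ℝ) < r := by linarith
  set φ := Real.arcsin (2 / r^2) with hφ
  have hb : (2 / r^2) ≤ 1 := by
    rw [div_le_one (by positivity)]; nlinarith
  have hb' : (-1:ℝ) ≤ 2 / r^2 := by
    have : (0:ℝ) ≤ 2 / r^2 := by positivity
    linarith
  have hsin : Real.sin φ = 2 / r^2 := Real.sin_arcsin hb' hb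
  have hcos : Real.cos φ = cc (r^2) := by
    rw [hφ, Real.cos_arcsin, cc]
  have hcsq : Real.cos (φ/2)^2 = (1 + Real.cos φ)/2 := by
    have := Real.cos_sq (φ/2)
    rw [show 2*(φ/2) = φ by ring] at this
    linarith
  have hs2 : Real.sin φ = 2 * Real.sin (φ/2) * Real.cos (φ/2) := by
    have := Real.sin_two_mul (φ/2)
    rw [show 2*(φ/2) = φ by ring] at this
    linarith
  ext i; fin_cases i
  · simp only [GG, Tt_polar, Fin.mk_zero, Fin.mk_one, Matrix.cons_val_zero, Matrix.cons_val_one,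
      Matrix.head_cons]
    rw [← hcos, ← hsin, Real.cos_add]
    linear_combination (r*Real.cos θ) * hcsq + (r*Real.sin θ/2) * hs2
  · simp only [GG, Tt_polar, Fin.mk_zero, Fin.mk_one, Matrix.cons_val_zero, Matrix.cons_val_one,
      Matrix.head_cons]
    rw [← hcos, ← hsin, Real.sin_add]
    linear_combination (r*Real.sin θ) * hcsq - (r*Real.cos θ/2) * hs2

noncomputable def cd (t : ℝ) : ℝ := 4 / (t^3 * cc t)
noncomputable def sd (t : ℝ) : ℝ := -2 / t^2

noncomputable def pr (i : Fin 2) : Esp →L[ℝ] ℝ := EuclideanSpace.proj i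

noncomputable def dT (p : Esp) : Esp →L[ℝ] ℝ := (2*p 0) • pr 0 + (2*p 1) • pr 1

noncomputable def D1 (p : Esp) : Esp →L[ℝ] ℝ :=
  ((1 + cc (Tt p))/2) • pr 0 + (-(1/(Tt p))) • pr 1 +
    ((p 0 * cd (Tt p) - p 1 * sd (Tt p))/2) • dT p

noncomputable def D2 (p : Esp) : Esp →L[ℝ] ℝ :=
  (1/(Tt p)) • pr 0 + ((1 + cc (Tt p))/2) • pr 1 +
    ((p 0 * sd (Tt p) + p 1 * cd (Tt p))/2) • dT p

noncomputable def DG (p : Esp) : Esp →L[ℝ] Esp :=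
  ((PiLp.continuousLinearEquiv 2 ℝ (fun _ : Fin 2 => ℝ)).symm.toContinuousLinearMap).comp
    (ContinuousLinearMap.pi ![D1 p, D2 p])

lemma cc_facts {t : ℝ} (ht : 2 < t) :
    0 < cc t ∧ cc t ≤ 1 ∧ (cc t)^2 = 1 - 4/t^2 := by
  have ht0 : (0:ℝ) < t := by linarith
  have h1 : (2/t)^2 < 1 := by
    have : 2/t < 1 := by rw [div_lt_one ht0]; linarith
    nlinarith [div_nonneg (by norm_num : (0:ℝ) ≤ 2) ht0.le]
  refine ⟨by rw [cc]; exact Real.sqrt_pos.2 (by nlinarith), ?_, ?_⟩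
  · rw [cc]
    exact Real.sqrt_le_one.2 (by nlinarith [sq_nonneg (2/t)])
  · rw [cc, Real.sq_sqrt (by nlinarith)]
    rw [div_pow]; ring

lemma hasD_cc {t : ℝ} (ht : 2 < t) : HasDerivAt cc (cd t) t := by
  have ht0 : (0:ℝ) < t := by linarith
  obtain ⟨hc0, hc1, hc2⟩ := cc_facts ht
  have hu : HasDerivAt (fun t : ℝ => 1 - (2/t)^2) (8/t^3) t := by
    have h2 : HasDerivAt (fun t : ℝ => 2/t) (-2/t^2) t := by
      simpa [div_eq_mul_inv, sq] using (hasDerivAt_inv ht0.ne').const_mul (2:ℝ)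
    have := ((h2.pow 2).const_sub 1)
    refine this.congr_deriv ?_
    field_simp
    ring
    rw [mul_inv_cancel₀ ht0.ne', one_mul]
  have hne : 1 - (2/t)^2 ≠ 0 := by
    rw [cc] at hc0
    intro h
    rw [h, Real.sqrt_zero] at hc0
    exact lt_irrefl 0 hc0
  have := hu.sqrt hne
  refine this.congr_deriv ?_
  rw [cd, cc]
  rw [show Real.sqrt (1 - (2/t)^2) = cc t from rfl]
  field_simp
  ring

lemma hasD_s {t : ℝ} (ht : 2 < t) : HasDerivAt (fun t : ℝ => 2/t) (sd t) t := by
  have ht0 : (0:ℝ) < t := by linarith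
  have h2 : HasDerivAt (fun t : ℝ => 2/t) (-2/t^2) t := by
    simpa [div_eq_mul_inv, sq] using (hasDerivAt_inv ht0.ne').const_mul (2:ℝ)
  simpa [sd] using h2

lemma hasD_T (p : Esp) : HasFDerivAt Tt (dT p) p := by
  have h0 : HasFDerivAt (fun q : Esp => q 0) (pr 0) p := (pr 0).hasFDerivAt
  have h1 : HasFDerivAt (fun q : Esp => q 1) (pr 1) p := (pr 1).hasFDerivAt
  have h := (h0.mul h0).add (h1.mul h1)
  have : HasFDerivAt Tt (p 0 • pr 0 + p 0 • pr 0 + (p 1 • pr 1 + p 1 • pr 1)) p := h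
  convert this using 1
  ext v
  simp [dT, pr]
  ring

lemma hasD_GG {p : Esp} (ht : 2 < Tt p) : HasFDerivAt GG (DG p) p := by
  have h0 : HasFDerivAt (fun q : Esp => q 0) (pr 0) p := (pr 0).hasFDerivAt
  have h1 : HasFDerivAt (fun q : Esp => q 1) (pr 1) p := (pr 1).hasFDerivAt
  have hT := hasD_T p
  have hc : HasFDerivAt (fun q : Esp => cc (Tt q)) (cd (Tt p) • dT p) p :=
    (hasD_cc ht).comp_hasFDerivAt p hT
  have hs : HasFDerivAt (fun q : Esp => 2 / Tt q) (sd (Tt p) • dT p) p :=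
    (hasD_s ht).comp_hasFDerivAt p hT
  have hG1 : HasFDerivAt (fun q : Esp => (1/2) * (q 0 * (1 + cc (Tt q)) - q 1 * (2 / Tt q)))
      (D1 p) p := by
    have := ((h0.mul (hc.const_add 1)).sub (h1.mul hs)).const_mul (1/2)
    refine this.congr_fderiv ?_
    ext v
    simp [D1, dT, pr]
    ring
  have hG2 : HasFDerivAt (fun q : Esp => (1/2) * (q 0 * (2 / Tt q) + q 1 * (1 + cc (Tt q))))
      (D2 p) p := by
    have := ((h0.mul hs).add (h1.mul (hc.const_add 1))).const_mul (1/2)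
    refine this.congr_fderiv ?_
    ext v
    simp [D2, dT, pr]
    ring
  have hΦ : HasFDerivAt (fun q : Esp => (![ (1/2) * (q 0 * (1 + cc (Tt q)) - q 1 * (2 / Tt q)),
      (1/2) * (q 0 * (2 / Tt q) + q 1 * (1 + cc (Tt q))) ] : Fin 2 → ℝ))
      (ContinuousLinearMap.pi ![D1 p, D2 p]) p := by
    apply hasFDerivAt_pi''
    intro i
    rw [ContinuousLinearMap.proj_pi]
    fin_cases i
    · simpa using hG1
    · simpa using hG2
  have := ((PiLp.continuousLinearEquiv 2 ℝ (fun _ : Fin 2 => ℝ)).symm.toContinuousLinearMap).hasFDerivAt.comp p hΦ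
  exact this

lemma DG_det {p : Esp} (ht : 2 < Tt p) : 1 ≤ (DG p).det := by
  obtain ⟨hc0, hc1, hc2⟩ := cc_facts ht
  have ht0 : (0:ℝ) < Tt p := by linarith
  set b := (EuclideanSpace.basisFun (Fin 2) ℝ).toBasis with hb
  have hdet : (DG p).det = (LinearMap.toMatrix b b ↑(DG p)).det :=
    (LinearMap.det_toMatrix b _).symm
  rw [hdet, Matrix.det_fin_two]
  have hM : ∀ i j : Fin 2, (LinearMap.toMatrix b b ↑(DG p)) i j
      = (![D1 p, D2 p] i) (EuclideanSpace.single j 1) := by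
    intro i j
    rw [LinearMap.toMatrix_apply]
    simp [b, DG, EuclideanSpace.basisFun_apply]
  rw [hM 0 0, hM 0 1, hM 1 0, hM 1 1]
  set x := p 0
  set y := p 1
  set t := Tt p with htt
  set c := cc t
  have e00 : (![D1 p, D2 p] 0) (EuclideanSpace.single 0 1)
      = (1+c)/2 + (x * cd t - y * sd t) * x := by
    simp [D1, dT, pr, EuclideanSpace.single_apply]
    ring
  have e01 : (![D1 p, D2 p] 0) (EuclideanSpace.single 1 1)
      = -(1/t) + (x * cd t - y * sd t) * y := by
    simp [D1, dT, pr, EuclideanSpace.single_apply]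
    ring
  have e10 : (![D1 p, D2 p] 1) (EuclideanSpace.single 0 1)
      = 1/t + (x * sd t + y * cd t) * x := by
    simp [D2, dT, pr, EuclideanSpace.single_apply]
    ring
  have e11 : (![D1 p, D2 p] 1) (EuclideanSpace.single 1 1)
      = (1+c)/2 + (x * sd t + y * cd t) * y := by
    simp [D2, dT, pr, EuclideanSpace.single_apply]
    ring
  rw [e00, e01, e10, e11]
  have hxy : x * x + y * y = t := htt.symm ▸ rfl
  have hcd : cd t = 4 / (t^3 * c) := rfl
  have hsd : sd t = -2 / t^2 := rfl
  have expand : ((1+c)/2 + (x * cd t - y * sd t) * x) * ((1+c)/2 + (x * sd t + y * cd t) * y)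
      - (-(1/t) + (x * cd t - y * sd t) * y) * (1/t + (x * sd t + y * cd t) * x)
      = ((1+c)/2)^2 + ((1+c)/2)*(cd t)*(x*x+y*y) + (1/t)*(1/t) + (sd t)*(x*x+y*y)*(1/t) := by
    ring
  rw [expand, hxy, hcd, hsd]
  have hval : ((1+c)/2)^2 + ((1+c)/2)*(4/(t^3*c))*t + (1/t)*(1/t) + (-2/t^2)*t*(1/t)
      = (1+c)/(2*c) := by
    have hc0' : c ≠ 0 := ne_of_gt hc0
    have ht0' : t ≠ 0 := ne_of_gt ht0
    have hc2' : c^2 * t^2 = t^2 - 4 := by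
      rw [hc2]; field_simp
    field_simp
    linear_combination (2 + c) * hc2'
  rw [hval, le_div_iff₀ (by positivity)]
  linarith

lemma tc_sqrt {t : ℝ} (ht : 2 < t) : t * cc t = Real.sqrt (t^2 - 4) := by
  have ht0 : (0:ℝ) < t := by linarith
  have hs : Real.sqrt (t^2) = t := Real.sqrt_sq ht0.le
  calc t * cc t = Real.sqrt (t^2) * Real.sqrt (1-(2/t)^2) := by rw [hs]; rfl
    _ = Real.sqrt (t^2 * (1-(2/t)^2)) := (Real.sqrt_mul (sq_nonneg t) _).symm
    _ = Real.sqrt (t^2-4) := by congr 1; field_simp; ring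

lemma normsq_GG {p : Esp} (ht : 2 < Tt p) :
    Tt (GG p) = (Tt p + Real.sqrt ((Tt p)^2 - 4))/2 := by
  obtain ⟨hc0, hc1, hc2⟩ := cc_facts ht
  have ht0 : (0:ℝ) < Tt p := by linarith
  have hg0 : GG p 0 = (1/2) * (p 0 * (1 + cc (Tt p)) - p 1 * (2 / Tt p)) := by
    simp only [GG, Matrix.cons_val_zero]
  have hg1 : GG p 1 = (1/2) * (p 0 * (2 / Tt p) + p 1 * (1 + cc (Tt p))) := by
    simp only [GG, Matrix.cons_val_one, Matrix.head_cons, Matrix.cons_val_zero]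
  have h1 : Tt (GG p) = (p 0 * p 0 + p 1 * p 1) * ((1 + cc (Tt p))^2 + (2 / Tt p)^2) / 4 := by
    rw [show Tt (GG p) = GG p 0 * GG p 0 + GG p 1 * GG p 1 from rfl, hg0, hg1]
    ring
  have hxy : p 0 * p 0 + p 1 * p 1 = Tt p := rfl
  rw [h1, hxy]
  have h2 : (1 + cc (Tt p))^2 + (2 / Tt p)^2 = 2 + 2 * cc (Tt p) := by
    have h4 : (2 / Tt p)^2 = 4 / (Tt p)^2 := by ring
    rw [h4]
    linear_combination hc2
  rw [h2, ← tc_sqrt ht]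
  ring

lemma GG_injOn (p q : Esp) (hp : 2 < Tt p) (hq : 2 < Tt q) (h : GG p = GG q) : p = q := by
  have htq : Tt p = Tt q := by
    have h1 : Tt (GG p) = Tt (GG q) := by rw [h]
    rw [normsq_GG hp, normsq_GG hq] at h1
    by_contra hne
    rcases lt_or_gt_of_ne hne with hlt | hlt
    · have h2 : Real.sqrt ((Tt p)^2-4) ≤ Real.sqrt ((Tt q)^2-4) :=
        Real.sqrt_le_sqrt (by nlinarith)
      linarith
    · have h2 : Real.sqrt ((Tt q)^2-4) ≤ Real.sqrt ((Tt p)^2-4) :=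
        Real.sqrt_le_sqrt (by nlinarith)
      linarith
  obtain ⟨hc0, hc1, hc2⟩ := cc_facts hp
  have ht0 : (0:ℝ) < Tt p := by linarith
  have h0 := congrFun (congrArg WithLp.ofLp h) 0
  have h1 := congrFun (congrArg WithLp.ofLp h) 1
  simp only [GG, Matrix.cons_val_zero, Matrix.cons_val_one, Matrix.head_cons, ← htq] at h0 h1
  set c := cc (Tt p)
  set s := 2 / Tt p
  have hpos : (0:ℝ) < (1+c)^2 + s^2 := by positivity
  have hd0 : ((1+c)^2 + s^2) * (p 0 - q 0) = 0 := by linear_combination (2*(1+c))*h0 + (2*s)*h1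
  have hd1 : ((1+c)^2 + s^2) * (p 1 - q 1) = 0 := by linear_combination (-2*s)*h0 + (2*(1+c))*h1
  have e0 : p 0 = q 0 := by
    rcases mul_eq_zero.1 hd0 with h' | h'
    · exact absurd h' (ne_of_gt hpos)
    · linarith
  have e1 : p 1 = q 1 := by
    rcases mul_eq_zero.1 hd1 with h' | h'
    · exact absurd h' (ne_of_gt hpos)
    · linarith
  ext i
  fin_cases i
  · exact e0
  · exact e1


/-- The map `g(p) = (p + f(p))/2`, where `f` rotates the point of polar coordinates `(r, θ)`
to `(r, θ + arcsin(2/r²))`, is injective on `{p : ‖p‖ > 100}` and expands Lebesgue measure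
by a factor of at least `4/5` there. -/
theorem midpoint_map_injective_measure_bound
    (g : EuclideanSpace ℝ (Fin 2) → EuclideanSpace ℝ (Fin 2))
    (hg : ∀ r θ : ℝ, 100 < r →
      g !₂[r * Real.cos θ, r * Real.sin θ] =
        !₂[r * Real.cos (Real.arcsin (2 / r ^ 2) / 2) *
            Real.cos (θ + Real.arcsin (2 / r ^ 2) / 2),
          r * Real.cos (Real.arcsin (2 / r ^ 2) / 2) *
            Real.sin (θ + Real.arcsin (2 / r ^ 2) / 2)]) :
    Set.InjOn g {p : EuclideanSpace ℝ (Fin 2) | 100 < ‖p‖} ∧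
    ∀ E : Set (EuclideanSpace ℝ (Fin 2)),
      E ⊆ {p : EuclideanSpace ℝ (Fin 2) | 100 < ‖p‖} → MeasurableSet E →
      MeasurableSet (g '' E) ∧ (4 / 5 : ℝ≥0∞) * volume E ≤ volume (g '' E) := by
  have hTS : ∀ p : Esp, 100 < ‖p‖ → 2 < Tt p := by
    intro p hp
    have h := normsq p
    nlinarith
  have hgG : ∀ p : Esp, 100 < ‖p‖ → g p = GG p := by
    intro p hp
    have hpne : p ≠ 0 := by
      intro h
      rw [h, norm_zero] at hp
      linarith
    obtain ⟨θ, hθ⟩ := polar p hpne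
    calc g p = g !₂[‖p‖ * Real.cos θ, ‖p‖ * Real.sin θ] := by rw [← hθ]
      _ = !₂[‖p‖ * Real.cos (Real.arcsin (2 / ‖p‖ ^ 2) / 2) *
            Real.cos (θ + Real.arcsin (2 / ‖p‖ ^ 2) / 2),
          ‖p‖ * Real.cos (Real.arcsin (2 / ‖p‖ ^ 2) / 2) *
            Real.sin (θ + Real.arcsin (2 / ‖p‖ ^ 2) / 2)] := hg ‖p‖ θ hp
      _ = GG !₂[‖p‖ * Real.cos θ, ‖p‖ * Real.sin θ] := key ‖p‖ θ hp
      _ = GG p := by rw [← hθ]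
  constructor
  · intro p hp q hq hpq
    rw [hgG p hp, hgG q hq] at hpq
    exact GG_injOn p q (hTS p hp) (hTS q hq) hpq
  · intro E hE hEm
    have hgE : g '' E = GG '' E := Set.image_congr (fun p hp => hgG p (hE hp))
    have hf' : ∀ x ∈ E, HasFDerivWithinAt GG (DG x) E x :=
      fun x hx => (hasD_GG (hTS x (hE hx))).hasFDerivWithinAt
    have hinj : Set.InjOn GG E :=
      fun a ha b hb hab => GG_injOn a b (hTS a (hE ha)) (hTS b (hE hb)) hab
    constructor
    · rw [hgE]
      exact measurable_image_of_fderivWithin hEm hf' hinj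
    · rw [hgE]
      have hle := lintegral_abs_det_fderiv_le_addHaar_image volume hEm hf' hinj
      have h1 : volume E = ∫⁻ _x in E, 1 ∂volume := (setLIntegral_one E).symm
      have h2 : (∫⁻ _x in E, (1:ℝ≥0∞) ∂volume)
          ≤ ∫⁻ x in E, ENNReal.ofReal |(DG x).det| ∂volume := by
        apply lintegral_mono_ae
        refine (ae_restrict_iff' hEm).2 (Filter.Eventually.of_forall fun x hx => ?_)
        have hd := DG_det (hTS x (hE hx))
        have habs : (1:ℝ) ≤ |(DG x).det| := le_trans hd (le_abs_self _)
        calc (1:ℝ≥0∞) = ENNReal.ofReal 1 := by simp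
          _ ≤ ENNReal.ofReal |(DG x).det| := ENNReal.ofReal_le_ofReal habs
      calc (4/5 : ℝ≥0∞) * volume E ≤ 1 * volume E := by
            have h45 : (4/5 : ℝ≥0∞) ≤ 1 := by
              rw [ENNReal.div_le_iff (by norm_num) (by norm_num)]
              norm_num
            exact mul_le_mul_left h45 _
        _ = volume E := one_mul _
        _ = ∫⁻ _x in E, 1 ∂volume := h1
        _ ≤ ∫⁻ x in E, ENNReal.ofReal |(DG x).det| ∂volume := h2
        _ ≤ volume (GG '' E) := hle
end

section
/- Let R > 1 and let r > 0 satisfy (R²/(R² − 1))·(2/r²) < 1. Set ψ(r) = arcsin((R²/(R² − 1))·(2/r²)), and for θ ∈ ℝ let p = (r·cos θ, r·sin θ) and q = (r·cos(θ + ψ(r)), r·sin(θ + ψ(r))). Then the four points p, q, R⁻¹·q, R⁻¹·p (in this cyclic order) are the vertices of an isosceles trapezoid of area 1: R⁻¹·p − R⁻¹·q = R⁻¹·(q − p) scaled appropriately so the side from R⁻¹·q to R⁻¹·p is parallel to the side from p to q with length ratio 1/R ≠ 1, the legs satisfy dist(q, R⁻¹·q) = dist(p, R⁻¹·p), and the shoelace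 area equals (1 − 1/R²)·(r²/2)·sin(ψ(r)) = 1. -/
open MeasureTheory Metric Real

/-- For `R > 1`, `r > 0` with `(R²/(R²−1))·(2/r²) < 1`, `ψ = arcsin((R²/(R²−1))·(2/r²))`,
the four points `p, q, R⁻¹q, R⁻¹p` (in this cyclic order) are the vertices of an isosceles
trapezoid of area `1`, where `p = (r cos θ, r sin θ)` and
`q = (r cos (θ + ψ), r sin (θ + ψ))`. -/
theorem isosceles_trapezoid_of_rotation_and_scaling (R r θ : ℝ) (hR : 1 < R) (hr : 0 < r)
    (harg : R ^ 2 / (R ^ 2 - 1) * (2 / r ^ 2) < 1)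
    (ψ : ℝ) (hψ : ψ = Real.arcsin (R ^ 2 / (R ^ 2 - 1) * (2 / r ^ 2)))
    (p q : EuclideanSpace ℝ (Fin 2))
    (hp : p = ![r * Real.cos θ, r * Real.sin θ])
    (hq : q = ![r * Real.cos (θ + ψ), r * Real.sin (θ + ψ)]) :
    R⁻¹ • q - R⁻¹ • p = R⁻¹ • (q - p) ∧
    0 < R⁻¹ ∧ R⁻¹ ≠ 1 ∧ q - p ≠ 0 ∧
    dist p (R⁻¹ • p) = dist q (R⁻¹ • q) ∧
    (1 / 2) * |det2 (q - p) (R⁻¹ • p - p) + det2 (R⁻¹ • q - q) (R⁻¹ • p - q)| =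
      (1 - 1 / R ^ 2) * (r ^ 2 / 2) * Real.sin ψ ∧
    (1 - 1 / R ^ 2) * (r ^ 2 / 2) * Real.sin ψ = 1 := by
  have hR0 : (0:ℝ) < R := by linarith
  have hR2 : (0:ℝ) < R ^ 2 - 1 := by nlinarith
  have hA0 : 0 < R ^ 2 / (R ^ 2 - 1) * (2 / r ^ 2) := by positivity
  have hsin : Real.sin ψ = R ^ 2 / (R ^ 2 - 1) * (2 / r ^ 2) := by
    rw [hψ]; exact Real.sin_arcsin (by linarith) harg.le
  have hsinpos : 0 < Real.sin ψ := hsin ▸ hA0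
  have hsub : Real.sin ψ = Real.sin (θ + ψ) * Real.cos θ - Real.cos (θ + ψ) * Real.sin θ := by
    have h := Real.sin_sub (θ + ψ) θ
    rw [add_sub_cancel_left] at h
    exact h
  have hp' : p = WithLp.toLp 2 ![r * Real.cos θ, r * Real.sin θ] := by rw [← hp]
  have hq' : q = WithLp.toLp 2 ![r * Real.cos (θ + ψ), r * Real.sin (θ + ψ)] := by rw [← hq]
  subst hp' hq'
  refine ⟨(smul_sub _ _ _).symm, inv_pos.mpr hR0, ?_, ?_, ?_, ?_, ?_⟩
  · have : R⁻¹ < 1 := inv_lt_one_of_one_lt₀ hR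
    exact ne_of_lt this
  · intro h
    have h0 : r * Real.cos (θ + ψ) - r * Real.cos θ = 0 := by
      have := congrArg (fun v : EuclideanSpace ℝ (Fin 2) => v 0) h
      simpa using this
    have h1 : r * Real.sin (θ + ψ) - r * Real.sin θ = 0 := by
      have := congrArg (fun v : EuclideanSpace ℝ (Fin 2) => v 1) h
      simpa using this
    have hc : Real.cos (θ + ψ) = Real.cos θ :=
      mul_left_cancel₀ hr.ne' (by linarith : r * Real.cos (θ + ψ) = r * Real.cos θ)
    have hs : Real.sin (θ + ψ) = Real.sin θ :=
      mul_left_cancel₀ hr.ne' (by linarith : r * Real.sin (θ + ψ) = r * Real.sin θ)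
    rw [hc, hs] at hsub
    nlinarith
  · rw [EuclideanSpace.dist_eq, EuclideanSpace.dist_eq]
    congr 1
    simp only [Fin.sum_univ_two, Real.dist_eq, sq_abs, PiLp.smul_apply, PiLp.toLp_apply, smul_eq_mul,
      Matrix.cons_val_zero, Matrix.cons_val_one, Matrix.head_cons]
    have h1 := Real.sin_sq_add_cos_sq θ
    have h2 := Real.sin_sq_add_cos_sq (θ + ψ)
    linear_combination ((1 - R⁻¹) * r) ^ 2 * h1 - ((1 - R⁻¹) * r) ^ 2 * h2
  · have key : det2 (WithLp.toLp 2 ![r * Real.cos (θ + ψ), r * Real.sin (θ + ψ)] -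
        WithLp.toLp 2 ![r * Real.cos θ, r * Real.sin θ])
        (R⁻¹ • (WithLp.toLp 2 ![r * Real.cos θ, r * Real.sin θ] : EuclideanSpace ℝ (Fin 2)) -
          WithLp.toLp 2 ![r * Real.cos θ, r * Real.sin θ]) +
        det2 (R⁻¹ • (WithLp.toLp 2 ![r * Real.cos (θ + ψ), r * Real.sin (θ + ψ)] : EuclideanSpace ℝ (Fin 2)) -
          WithLp.toLp 2 ![r * Real.cos (θ + ψ), r * Real.sin (θ + ψ)])
        (R⁻¹ • (WithLp.toLp 2 ![r * Real.cos θ, r * Real.sin θ] : EuclideanSpace ℝ (Fin 2)) -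
          WithLp.toLp 2 ![r * Real.cos (θ + ψ), r * Real.sin (θ + ψ)]) =
        (1 - 1 / R ^ 2) * r ^ 2 * Real.sin ψ := by
      simp only [det2]
      rw [hsub]
      have hRne : R ≠ 0 := hR0.ne'
      simp [PiLp.sub_apply, PiLp.smul_apply, smul_eq_mul]
      field_simp
      ring
    rw [key]
    have hpos : 0 < (1 - 1 / R ^ 2) * r ^ 2 * Real.sin ψ := by
      have : 0 < 1 - 1 / R ^ 2 := by
        rw [sub_pos, div_lt_one (by positivity)]
        nlinarith
      positivity
    rw [abs_of_pos hpos]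
    ring
  · rw [hsin]
    field_simp
end

section
/- Let S ⊆ ℝ² be measurable and suppose the origin is a point of density 1 of S, i.e. lim_{δ→0⁺} μ(B(0,δ) ∩ S)/μ(B(0,δ)) = 1. For R > 0 let R·S = {R·s : s ∈ S} and S_R = S ∩ (R·S). Then for every bounded measurable set B ⊆ ℝ², one has lim_{R→∞} μ(B ∩ S_R) = μ(B ∩ S); equivalently, μ((B ∩ S) \ S_R) → 0 as R → ∞. -/
open MeasureTheory Metric Filter Pointwise

local notation "E2" => EuclideanSpace ℝ (Fin 2)

/-- If the origin is a point of density `1` of a measurable set `S ⊆ ℝ²`, then for every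
bounded measurable set `B`, letting `S_R = S ∩ (R • S)`, one has
`μ(B ∩ S_R) → μ(B ∩ S)` as `R → ∞`. -/
theorem measure_inter_dilation_tendsto
    (S : Set (EuclideanSpace ℝ (Fin 2))) (hS : MeasurableSet S)
    (hdensity : Tendsto
      (fun δ : ℝ => volume (ball (0 : EuclideanSpace ℝ (Fin 2)) δ ∩ S) /
        volume (ball (0 : EuclideanSpace ℝ (Fin 2)) δ))
      (nhdsWithin 0 (Set.Ioi 0)) (nhds 1)) :
    ∀ B : Set (EuclideanSpace ℝ (Fin 2)), MeasurableSet B → Bornology.IsBounded B →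
      Tendsto (fun R : ℝ => volume (B ∩ (S ∩ R • S))) atTop (nhds (volume (B ∩ S))) := by
  intro B hB hBbd
  obtain ⟨M, hM, hBsub⟩ := hBbd.subset_ball_lt 0 0
  have hBS : B ∩ S ⊆ ball (0 : E2) M := Set.inter_subset_left.trans hBsub
  have hfin : volume (B ∩ S) ≠ ⊤ :=
    ((measure_mono hBS).trans_lt measure_ball_lt_top).ne
  set q : ℝ → ENNReal := fun δ => volume (ball (0 : E2) δ \ S) / volume (ball (0 : E2) δ)
    with hq
  have hqA : Tendsto q (nhdsWithin 0 (Set.Ioi 0)) (nhds 0) := by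
    have h1 : Tendsto (fun δ : ℝ => 1 - volume (ball (0 : E2) δ ∩ S) / volume (ball (0 : E2) δ))
        (nhdsWithin 0 (Set.Ioi 0)) (nhds (1 - 1)) :=
      ENNReal.Tendsto.sub tendsto_const_nhds hdensity (Or.inl ENNReal.one_ne_top)
    rw [tsub_self] at h1
    refine h1.congr' ?_
    filter_upwards [self_mem_nhdsWithin] with δ (hδ : 0 < δ)
    have ha0 : volume (ball (0 : E2) δ) ≠ 0 := (measure_ball_pos volume _ hδ).ne'
    have haT : volume (ball (0 : E2) δ) ≠ ⊤ := measure_ball_lt_top.ne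
    have hsub : volume (ball (0 : E2) δ \ S)
        = volume (ball (0 : E2) δ) - volume (ball (0 : E2) δ ∩ S) := by
      rw [← Set.diff_self_inter]
      exact measure_diff Set.inter_subset_left
        ((measurableSet_ball.inter hS).nullMeasurableSet)
        (((measure_mono Set.inter_subset_left).trans_lt measure_ball_lt_top).ne)
    rw [hq]
    simp only
    rw [hsub, ENNReal.sub_div (fun _ _ => ha0), ENNReal.div_self ha0 haT]
  have hMR : Tendsto (fun R : ℝ => M / R) atTop (nhdsWithin 0 (Set.Ioi 0)) := by
    rw [tendsto_nhdsWithin_iff]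
    constructor
    · simpa [div_eq_mul_inv] using tendsto_inv_atTop_zero.const_mul M
    · filter_upwards [eventually_gt_atTop 0] with R hR
      exact div_pos hM hR
  have hqB : Tendsto (fun R : ℝ => volume (ball (0 : E2) M) * q (M / R)) atTop (nhds 0) := by
    have := ENNReal.Tendsto.const_mul (a := volume (ball (0 : E2) M)) (hqA.comp hMR) (Or.inr measure_ball_lt_top.ne)
    simpa using this
  have key : Tendsto (fun R : ℝ => volume ((B ∩ S) \ (R • S))) atTop (nhds 0) := by
    apply tendsto_of_tendsto_of_tendsto_of_le_of_le' tendsto_const_nhds hqB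
    · filter_upwards with R using zero_le
    · filter_upwards [eventually_gt_atTop 0] with R hR
      have hRne : R ≠ 0 := hR.ne'
      set δ := M / R with hδdef
      have hscale : (R : ℝ) • ball (0 : E2) δ = ball (0 : E2) M := by
        rw [_root_.smul_ball hRne, smul_zero, Real.norm_eq_abs, abs_of_pos hR,
          mul_div_cancel₀ _ hRne]
      have hdiffscale : ball (0 : E2) M \ R • S = R • (ball (0 : E2) δ \ S) := by
        rw [Set.smul_set_sdiff₀ hRne, hscale]
      have hrank : |R ^ Module.finrank ℝ E2| = R ^ 2 := by
        rw [finrank_euclideanSpace_fin, abs_of_pos (pow_pos hR 2)]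
      have hmeas : volume (ball (0 : E2) M \ R • S)
          = ENNReal.ofReal (R ^ 2) * volume (ball (0 : E2) δ \ S) := by
        rw [hdiffscale, Measure.addHaar_smul, hrank]
      have hball : volume (ball (0 : E2) M) = ENNReal.ofReal (R ^ 2) * volume (ball (0 : E2) δ) := by
        rw [← hscale, Measure.addHaar_smul, hrank]
      have hδpos : 0 < δ := div_pos hM hR
      have ha0 : volume (ball (0 : E2) δ) ≠ 0 := (measure_ball_pos volume _ hδpos).ne'
      have haT : volume (ball (0 : E2) δ) ≠ ⊤ := measure_ball_lt_top.ne
      calc volume ((B ∩ S) \ (R • S)) ≤ volume (ball (0 : E2) M \ R • S) :=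
            measure_mono (Set.diff_subset_diff_left hBS)
        _ = ENNReal.ofReal (R ^ 2) * volume (ball (0 : E2) δ \ S) := hmeas
        _ = volume (ball (0 : E2) M) * q δ := by
            rw [hball, hq]
            simp only
            rw [mul_assoc]
            congr 1
            rw [ENNReal.mul_div_cancel ha0 haT]
  have heq : ∀ᶠ R : ℝ in atTop,
      volume (B ∩ (S ∩ R • S)) = volume (B ∩ S) - volume ((B ∩ S) \ (R • S)) := by
    filter_upwards [eventually_gt_atTop 0] with R hR
    have hRS : MeasurableSet (R • S) := hS.const_smul₀ R
    have h := measure_inter_add_diff (μ := volume) (B ∩ S) hRS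
    rw [← Set.inter_assoc]
    exact ENNReal.eq_sub_of_add_eq
      (((measure_mono Set.diff_subset).trans_lt hfin.lt_top).ne) h
  have hfinal := ENNReal.Tendsto.sub (tendsto_const_nhds (x := volume (B ∩ S))) key
    (Or.inl hfin)
  rw [tsub_zero] at hfinal
  exact hfinal.congr' (heq.mono fun R h => h.symm)
end

section
/- Let A ∈ ℝ², ε > 0, B = B(A, ε), B' = B(A, ε/2). Let S ⊆ ℝ² be measurable with μ(B ∩ S) > (8/9)·μ(B). Let F : B' → ℝ² be an injective measurable map with F(B') ⊆ B such that for every measurable E ⊆ B' the image F(E) is measurable with μ(F(E)) ≥ (4/5)·μ(E). Then there exists a point p ∈ B' ∩ S with F(p) ∈ B ∩ S. -/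
open MeasureTheory Metric ENNReal

/-- Density/pigeonhole lemma: if `S` occupies more than `8/9` of the disk `B = B(A, ε)` and
`F : B' → B` (where `B' = B(A, ε/2)`) is an injective measurable map that shrinks Lebesgue
measure by a factor of at most `4/5`, then some `p ∈ B' ∩ S` has `F p ∈ B ∩ S`. -/
theorem exists_point_image_in_set (A : EuclideanSpace ℝ (Fin 2)) (ε : ℝ) (hε : 0 < ε)
    (S : Set (EuclideanSpace ℝ (Fin 2))) (hS : MeasurableSet S)
    (hdense : (8 / 9 : ℝ≥0∞) * volume (ball A ε) < volume (ball A ε ∩ S))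
    (F : EuclideanSpace ℝ (Fin 2) → EuclideanSpace ℝ (Fin 2))
    (hFinj : Set.InjOn F (ball A (ε / 2)))
    (hFmeas : Measurable fun x : ball A (ε / 2) => F x)
    (hFmaps : F '' ball A (ε / 2) ⊆ ball A ε)
    (hFimage : ∀ E : Set (EuclideanSpace ℝ (Fin 2)), E ⊆ ball A (ε / 2) → MeasurableSet E →
      MeasurableSet (F '' E) ∧ (4 / 5 : ℝ≥0∞) * volume E ≤ volume (F '' E)) :
    ∃ p ∈ ball A (ε / 2) ∩ S, F p ∈ ball A ε ∩ S := by
  by_contra hcon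
  push_neg at hcon
  set B : Set (EuclideanSpace ℝ (Fin 2)) := ball A ε with hB
  set B' : Set (EuclideanSpace ℝ (Fin 2)) := ball A (ε / 2) with hB'
  set E : Set (EuclideanSpace ℝ (Fin 2)) := B' ∩ S with hE
  have hE_sub : E ⊆ B' := Set.inter_subset_left
  have hE_meas : MeasurableSet E := measurableSet_ball.inter hS
  obtain ⟨hFE_meas, hFE_vol⟩ := hFimage E hE_sub hE_meas
  have hFE_sub : F '' E ⊆ B \ S := by
    rintro y ⟨p, hp, rfl⟩
    have hpB' : p ∈ B' := hp.1
    have hFB : F p ∈ B := hFmaps ⟨p, hpB', rfl⟩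
    exact ⟨hFB, fun hFS => hcon p hp ⟨hFB, hFS⟩⟩
  have hVfin : volume B ≠ ⊤ := measure_ball_lt_top.ne
  -- measure of small ball is a quarter of the big ball
  have hW : (4 : ℝ≥0∞) * volume B' = volume B := by
    have h1 := Measure.addHaar_ball (volume : Measure (EuclideanSpace ℝ (Fin 2))) A
      (by positivity : (0:ℝ) ≤ ε / 2)
    have h2 := Measure.addHaar_ball (volume : Measure (EuclideanSpace ℝ (Fin 2))) A hε.le
    rw [hB, hB', h1, h2, finrank_euclideanSpace_fin, ← mul_assoc]
    congr 1
    rw [show (4 : ℝ≥0∞) = ENNReal.ofReal 4 by norm_num, ← ENNReal.ofReal_mul (by norm_num)]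
    congr 1
    ring
  have hsplit : volume (B ∩ S) + volume (B \ S) = volume B := measure_inter_add_diff B hS
  have hB'le : volume B' ≤ volume E + volume (B \ S) := by
    have hsub : B' ⊆ E ∪ (B \ S) := by
      intro x hx
      by_cases hxS : x ∈ S
      · exact Or.inl ⟨hx, hxS⟩
      · exact Or.inr ⟨ball_subset_ball (by linarith) hx, hxS⟩
    exact (measure_mono hsub).trans (measure_union_le _ _)
  have hFE_le_D : volume (F '' E) ≤ volume (B \ S) := measure_mono hFE_sub
  -- pass to real numbers
  have hDfin : volume (B \ S) ≠ ⊤ := ((measure_mono Set.diff_subset).trans_lt measure_ball_lt_top).ne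
  have hTfin : volume (B ∩ S) ≠ ⊤ :=
    ((measure_mono Set.inter_subset_left).trans_lt measure_ball_lt_top).ne
  have hB'fin : volume B' ≠ ⊤ := measure_ball_lt_top.ne
  have hEfin : volume E ≠ ⊤ := ((measure_mono hE_sub).trans_lt measure_ball_lt_top).ne
  have hFEfin : volume (F '' E) ≠ ⊤ := (hFE_le_D.trans_lt hDfin.lt_top).ne
  set v := (volume B).toReal
  set w := (volume B').toReal
  set t := (volume (B ∩ S)).toReal
  set d := (volume (B \ S)).toReal
  set e := (volume E).toReal
  set f := (volume (F '' E)).toReal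
  have rW : 4 * w = v := by
    rw [show (4:ℝ) = ((4:ℝ≥0∞)).toReal by norm_num, ← ENNReal.toReal_mul, hW]
  have rsplit : t + d = v := by rw [← ENNReal.toReal_add hTfin hDfin, hsplit]
  have rdense : 8 / 9 * v < t := by
    have := (ENNReal.toReal_lt_toReal
      (ENNReal.mul_ne_top (ENNReal.div_lt_top (by simp) (by simp)).ne hVfin) hTfin).mpr hdense
    rwa [ENNReal.toReal_mul, show ((8:ℝ≥0∞)/9).toReal = 8/9 by
      simp [ENNReal.toReal_div]] at this
  have rB'le : w ≤ e + d := by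
    rw [← ENNReal.toReal_add hEfin hDfin]
    exact (ENNReal.toReal_le_toReal hB'fin (ENNReal.add_ne_top.mpr ⟨hEfin, hDfin⟩)).mpr hB'le
  have rFE : 4 / 5 * e ≤ f := by
    have := (ENNReal.toReal_le_toReal
      (ENNReal.mul_ne_top (ENNReal.div_lt_top (by simp) (by simp)).ne hEfin) hFEfin).mpr hFE_vol
    rwa [ENNReal.toReal_mul, show ((4:ℝ≥0∞)/5).toReal = 4/5 by
      simp [ENNReal.toReal_div]] at this
  have rFD : f ≤ d := (ENNReal.toReal_le_toReal hFEfin hDfin).mpr hFE_le_D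
  linarith
end

section
/- Let S₀ = {p ∈ ℝ² : ‖p‖ ≤ 1/10} ∪ {(n, 0) : n = 1, 2, 3, …}. Then S₀ is an unbounded measurable subset of ℝ² of positive (finite) Lebesgue measure, and S₀ does NOT contain the four vertices of any isosceles trapezoid of area 1: there are no points a, b, c, d ∈ S₀ and real t with 0 < t, t ≠ 1, c − d = t·(b − a) ≠ 0, dist(a,d) = dist(b,c), and shoelace area (1/2)·|det(b − a, d − a) + det(c − b, d − b)| = 1. -/
open MeasureTheory Metric

/-- The counterexample set: the closed disk of radius `1/10` about the origin together with
the points `(n, 0)` for `n = 1, 2, 3, …`. -/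
noncomputable def S₀ : Set (EuclideanSpace ℝ (Fin 2)) :=
  {p : EuclideanSpace ℝ (Fin 2) | ‖p‖ ≤ 1 / 10} ∪
    {p : EuclideanSpace ℝ (Fin 2) | ∃ n : ℕ, 0 < n ∧ p = ![(n : ℝ), 0]}

private lemma coord_le_dist (p q : EuclideanSpace ℝ (Fin 2)) (i : Fin 2) :
    |p i - q i| ≤ dist p q := by
  rw [EuclideanSpace.dist_eq]
  have h : dist (p i) (q i) ^ 2 ≤ ∑ j, dist (p j) (q j) ^ 2 :=
    Finset.single_le_sum (f := fun j => dist (p j) (q j) ^ 2)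
      (fun j _ => sq_nonneg _) (Finset.mem_univ i)
  calc |p i - q i| = Real.sqrt (dist (p i) (q i) ^ 2) := by
        rw [Real.sqrt_sq dist_nonneg, Real.dist_eq]
    _ ≤ _ := Real.sqrt_le_sqrt h

private lemma dist_le_coords (p q : EuclideanSpace ℝ (Fin 2)) :
    dist p q ≤ |p 0 - q 0| + |p 1 - q 1| := by
  rw [EuclideanSpace.dist_eq, Fin.sum_univ_two, Real.dist_eq, Real.dist_eq]
  have h : |p 0 - q 0| ^ 2 + |p 1 - q 1| ^ 2 ≤ (|p 0 - q 0| + |p 1 - q 1|) ^ 2 := by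
    nlinarith [abs_nonneg (p 0 - q 0), abs_nonneg (p 1 - q 1)]
  calc Real.sqrt (|p 0 - q 0| ^ 2 + |p 1 - q 1| ^ 2)
      ≤ Real.sqrt ((|p 0 - q 0| + |p 1 - q 1|) ^ 2) := Real.sqrt_le_sqrt h
    _ = _ := Real.sqrt_sq (by positivity)

private lemma S₀_cases {p : EuclideanSpace ℝ (Fin 2)} (hp : p ∈ S₀) :
    (-(1/10) ≤ p 0 ∧ p 0 ≤ 1/10 ∧ -(1/10) ≤ p 1 ∧ p 1 ≤ 1/10) ∨
    (∃ n : ℕ, p = ![(n : ℝ), 0] ∧ p 0 = (n : ℝ) ∧ p 1 = 0 ∧ 1 ≤ p 0) := by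
  rcases hp with h | ⟨n, hn, hpn⟩
  · left
    have h0 : |p 0| ≤ 1/10 := by
      have h' := coord_le_dist p 0 0
      simp only [show (0 : EuclideanSpace ℝ (Fin 2)) 0 = 0 from rfl, sub_zero] at h'
      calc |p 0| ≤ dist p 0 := h'
        _ = ‖p‖ := dist_zero_right p
        _ ≤ 1/10 := h
    have h1 : |p 1| ≤ 1/10 := by
      have h' := coord_le_dist p 0 1
      simp only [show (0 : EuclideanSpace ℝ (Fin 2)) 1 = 0 from rfl, sub_zero] at h'
      calc |p 1| ≤ dist p 0 := h'
        _ = ‖p‖ := dist_zero_right p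
        _ ≤ 1/10 := h
    rw [abs_le] at h0 h1
    exact ⟨h0.1, h0.2, h1.1, h1.2⟩
  · right
    refine ⟨n, hpn, by simp [hpn], by simp [hpn], ?_⟩
    rw [hpn]
    show (1:ℝ) ≤ (n : ℝ)
    exact_mod_cast hn

private lemma ballS_eq :
    {p : EuclideanSpace ℝ (Fin 2) | ‖p‖ ≤ 1 / 10} = closedBall 0 (1/10) := by
  ext p; simp [Metric.mem_closedBall, dist_zero_right]

private lemma cntS :
    {p : EuclideanSpace ℝ (Fin 2) | ∃ n : ℕ, 0 < n ∧ p = ![(n : ℝ), 0]}.Countable := by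
  apply Set.Countable.mono
    (s₁ := {p : EuclideanSpace ℝ (Fin 2) | ∃ n : ℕ, 0 < n ∧ p = ![(n : ℝ), 0]})
    (s₂ := Set.range (fun n : ℕ => (WithLp.toLp 2 ![(n : ℝ), 0] : EuclideanSpace ℝ (Fin 2))))
  · rintro p ⟨n, _, hpn⟩; exact ⟨n, (congrArg (WithLp.toLp 2) hpn).symm.trans (WithLp.toLp_ofLp (p := 2) p)⟩
  · exact Set.countable_range _

private lemma nat_eq_of_close {m n : ℕ} (h1 : (m:ℝ) < n + 1) (h2 : (n:ℝ) < m + 1) :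
    m = n := by
  have h1' : m < n + 1 := by exact_mod_cast h1
  have h2' : n < m + 1 := by exact_mod_cast h2
  omega

private lemma absdet_le {x0 x1 y0 y1 : ℝ} (h0 : |x0| ≤ 1/5) (h1 : |x1| ≤ 1/5)
    (g0 : |y0| ≤ 1/5) (g1 : |y1| ≤ 1/5) : |x0 * y1 - x1 * y0| ≤ 2/25 := by
  calc |x0 * y1 - x1 * y0| ≤ |x0 * y1| + |x1 * y0| := abs_sub _ _
    _ = |x0| * |y1| + |x1| * |y0| := by rw [abs_mul, abs_mul]
    _ ≤ (1/5) * (1/5) + (1/5) * (1/5) :=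
        add_le_add (mul_le_mul h0 g1 (abs_nonneg _) (by norm_num))
          (mul_le_mul h1 g0 (abs_nonneg _) (by norm_num))
    _ = 2/25 := by norm_num

private lemma dist_gap {p q : EuclideanSpace ℝ (Fin 2)} (hp : 1 ≤ p 0)
    (hq : q 0 ≤ 1/10) : 9/10 ≤ dist p q := by
  have l1 := coord_le_dist p q 0
  have l3 := le_abs_self (p 0 - q 0)
  linarith

private lemma dist_small {p q : EuclideanSpace ℝ (Fin 2)}
    (hp0l : -(1/10) ≤ p 0) (hp0u : p 0 ≤ 1/10) (hp1l : -(1/10) ≤ p 1) (hp1u : p 1 ≤ 1/10)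
    (hq0l : -(1/10) ≤ q 0) (hq0u : q 0 ≤ 1/10) (hq1l : -(1/10) ≤ q 1) (hq1u : q 1 ≤ 1/10) :
    dist p q ≤ 2/5 := by
  have l := dist_le_coords p q
  have h0 : |p 0 - q 0| ≤ 1/5 := abs_le.mpr ⟨by linarith, by linarith⟩
  have h1 : |p 1 - q 1| ≤ 1/5 := abs_le.mpr ⟨by linarith, by linarith⟩
  linarith

/-- Upper bound for distance between an axis point `p` and a disk point `q`. -/
private lemma dist_axis_disk_le {p q : EuclideanSpace ℝ (Fin 2)}
    (hp1 : p 1 = 0) (hp0 : 1 ≤ p 0)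
    (hq0l : -(1/10) ≤ q 0) (hq0u : q 0 ≤ 1/10) (hq1l : -(1/10) ≤ q 1) (hq1u : q 1 ≤ 1/10) :
    dist p q ≤ p 0 + 1/5 := by
  have l := dist_le_coords p q
  have h0 : |p 0 - q 0| ≤ p 0 + 1/10 := abs_le.mpr ⟨by linarith, by linarith⟩
  have h1 : |p 1 - q 1| ≤ 1/10 := abs_le.mpr ⟨by linarith, by linarith⟩
  linarith

/-- Lower bound for distance between an axis point `p` and a disk point `q`. -/
private lemma dist_axis_disk_ge {p q : EuclideanSpace ℝ (Fin 2)}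
    (hp0 : 1 ≤ p 0) (hq0u : q 0 ≤ 1/10) :
    p 0 - 1/10 ≤ dist p q := by
  have l1 := coord_le_dist p q 0
  have l3 := le_abs_self (p 0 - q 0)
  linarith

set_option maxHeartbeats 2000000 in
/-- `S₀` is an unbounded measurable set of positive finite Lebesgue measure containing no four
vertices of an isosceles trapezoid of area `1`; hence the infinite-measure hypothesis in the
trapezoid theorem cannot be weakened to unboundedness with positive measure. -/
theorem counterexample_trapezoid :
    ¬ Bornology.IsBounded S₀ ∧ MeasurableSet S₀ ∧ 0 < volume S₀ ∧ volume S₀ < ⊤ ∧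
    ¬ ∃ (a b c d : EuclideanSpace ℝ (Fin 2)) (t : ℝ),
        a ∈ S₀ ∧ b ∈ S₀ ∧ c ∈ S₀ ∧ d ∈ S₀ ∧
        0 < t ∧ t ≠ 1 ∧ c - d = t • (b - a) ∧ b - a ≠ 0 ∧
        dist a d = dist b c ∧
        (1 / 2) * |det2 (b - a) (d - a) + det2 (c - b) (d - b)| = 1 := by
  refine ⟨?_, ?_, ?_, ?_, ?_⟩
  · -- unbounded
    intro hB
    obtain ⟨r, hr⟩ := isBounded_iff_forall_norm_le.1 hB
    obtain ⟨n, hn⟩ := exists_nat_gt (max r 1)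
    have hn1 : 0 < n := by
      have h1 : (1:ℝ) < n := lt_of_le_of_lt (le_max_right r 1) hn
      exact_mod_cast Nat.pos_of_ne_zero (by rintro rfl; norm_num at h1)
    obtain ⟨x, hx⟩ : ∃ x : EuclideanSpace ℝ (Fin 2), x = ![(n:ℝ), 0] := ⟨WithLp.toLp 2 ![(n:ℝ), 0], rfl⟩
    have hmem : x ∈ S₀ := Or.inr ⟨n, hn1, hx⟩
    have hnorm : ‖x‖ = n := by
      rw [EuclideanSpace.norm_eq, Fin.sum_univ_two, hx]
      norm_num [Real.sqrt_sq (Nat.cast_nonneg n)]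
    have h2 := hr x hmem
    have h3 : r < (n:ℝ) := lt_of_le_of_lt (le_max_left r 1) hn
    rw [hnorm] at h2
    linarith
  · -- measurable
    apply MeasurableSet.union
    · rw [ballS_eq]; exact measurableSet_closedBall
    · exact cntS.measurableSet
  · -- positive volume
    have h : volume (closedBall (0 : EuclideanSpace ℝ (Fin 2)) (1/10)) ≤ volume S₀ := by
      apply measure_mono
      rw [← ballS_eq]
      exact Set.subset_union_left
    exact lt_of_lt_of_le (measure_closedBall_pos volume 0 (by norm_num)) h
  · -- finite volume
    calc volume S₀ ≤ volume {p : EuclideanSpace ℝ (Fin 2) | ‖p‖ ≤ 1 / 10} +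
        volume {p : EuclideanSpace ℝ (Fin 2) | ∃ n : ℕ, 0 < n ∧ p = ![(n : ℝ), 0]} :=
          measure_union_le _ _
      _ = volume (closedBall (0 : EuclideanSpace ℝ (Fin 2)) (1/10)) := by
          rw [ballS_eq, cntS.measure_zero, add_zero]
      _ < ⊤ := measure_closedBall_lt_top
  · -- no isosceles trapezoid of area 1
    rintro ⟨a, b, c, d, t, ha, hb, hc, hd, ht, ht1, hcd, hba, hiso, harea⟩
    have hcd0 : c 0 - d 0 = t * (b 0 - a 0) := by
      have h : (c - d) 0 = (t • (b - a)) 0 := by rw [hcd]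
      simpa using h
    have hcd1 : c 1 - d 1 = t * (b 1 - a 1) := by
      have h : (c - d) 1 = (t • (b - a)) 1 := by rw [hcd]
      simpa using h
    have hkey : (1 + t) * |(b 0 - a 0) * (d 1 - a 1) - (b 1 - a 1) * (d 0 - a 0)| = 2 := by
      have harea' : 1 / 2 * |(b 0 - a 0) * (d 1 - a 1) - (b 1 - a 1) * (d 0 - a 0)
          + ((c 0 - b 0) * (d 1 - b 1) - (c 1 - b 1) * (d 0 - b 0))| = 1 := by
        simpa [det2] using harea
      have hinner : (b 0 - a 0) * (d 1 - a 1) - (b 1 - a 1) * (d 0 - a 0)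
          + ((c 0 - b 0) * (d 1 - b 1) - (c 1 - b 1) * (d 0 - b 0))
          = (1 + t) * ((b 0 - a 0) * (d 1 - a 1) - (b 1 - a 1) * (d 0 - a 0)) := by
        linear_combination (d 1 - b 1) * hcd0 - (d 0 - b 0) * hcd1
      rw [hinner, abs_mul, abs_of_pos (by linarith : (0:ℝ) < 1 + t)] at harea'
      linarith
    rcases S₀_cases ha with ⟨ha0l, ha0u, ha1l, ha1u⟩ | ⟨na, haeq, ha0n, ha1z, ha0ge⟩ <;>
      rcases S₀_cases hb with ⟨hb0l, hb0u, hb1l, hb1u⟩ | ⟨nb, hbeq, hb0n, hb1z, hb0ge⟩ <;>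
      rcases S₀_cases hc with ⟨hc0l, hc0u, hc1l, hc1u⟩ | ⟨nc, hceq, hc0n, hc1z, hc0ge⟩ <;>
      rcases S₀_cases hd with ⟨hd0l, hd0u, hd1l, hd1u⟩ | ⟨nd, hdeq, hd0n, hd1z, hd0ge⟩
    -- case DDDD
    · have c1 : |b 0 - a 0| ≤ 1/5 := abs_le.mpr ⟨by linarith, by linarith⟩
      have c2 : |b 1 - a 1| ≤ 1/5 := abs_le.mpr ⟨by linarith, by linarith⟩
      have c3 : |d 0 - a 0| ≤ 1/5 := abs_le.mpr ⟨by linarith, by linarith⟩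
      have c4 : |d 1 - a 1| ≤ 1/5 := abs_le.mpr ⟨by linarith, by linarith⟩
      have c5 : |c 0 - d 0| ≤ 1/5 := abs_le.mpr ⟨by linarith, by linarith⟩
      have c6 : |c 1 - d 1| ≤ 1/5 := abs_le.mpr ⟨by linarith, by linarith⟩
      have hD : |(b 0 - a 0) * (d 1 - a 1) - (b 1 - a 1) * (d 0 - a 0)| ≤ 2/25 :=
        absdet_le c1 c2 c3 c4
      have hTD : t * |(b 0 - a 0) * (d 1 - a 1) - (b 1 - a 1) * (d 0 - a 0)| ≤ 2/25 := by
        have e : t * |(b 0 - a 0) * (d 1 - a 1) - (b 1 - a 1) * (d 0 - a 0)|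
            = |(c 0 - d 0) * (d 1 - a 1) - (c 1 - d 1) * (d 0 - a 0)| := by
          rw [← abs_of_pos ht, ← abs_mul]
          congr 1
          linear_combination (d 0 - a 0) * hcd1 - (d 1 - a 1) * hcd0
        rw [e]
        exact absdet_le c5 c6 c3 c4
      have hexp : (1 + t) * |(b 0 - a 0) * (d 1 - a 1) - (b 1 - a 1) * (d 0 - a 0)|
          = |(b 0 - a 0) * (d 1 - a 1) - (b 1 - a 1) * (d 0 - a 0)|
            + t * |(b 0 - a 0) * (d 1 - a 1) - (b 1 - a 1) * (d 0 - a 0)| := by ring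
      linarith [hkey, hD, hTD, hexp.symm.trans hkey]
    -- case DDDA : d axis, rest disk
    · have l1 := dist_gap (p := d) (q := a) hd0ge ha0u
      have l2 := dist_small hb0l hb0u hb1l hb1u hc0l hc0u hc1l hc1u
      rw [dist_comm d a] at l1
      linarith [hiso]
    -- case DDAD : c axis, rest disk
    · have l1 := dist_gap (p := c) (q := b) hc0ge hb0u
      have l2 := dist_small ha0l ha0u ha1l ha1u hd0l hd0u hd1l hd1u
      rw [dist_comm c b] at l1
      linarith [hiso]
    -- case DDAA : c, d axis; a, b disk
    · have u1 := dist_axis_disk_le hd1z hd0ge ha0l ha0u ha1l ha1u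
      have u2 := dist_axis_disk_le hc1z hc0ge hb0l hb0u hb1l hb1u
      have g1 := dist_axis_disk_ge hd0ge ha0u
      have g2 := dist_axis_disk_ge hc0ge hb0u
      rw [dist_comm d a] at u1 g1
      rw [dist_comm c b] at u2 g2
      have hnn : nc = nd := by
        apply nat_eq_of_close
        · rw [← hc0n, ← hd0n]; linarith [hiso]
        · rw [← hc0n, ← hd0n]; linarith [hiso]
      have hcd' : c = d := by apply WithLp.ofLp_injective 2; rw [hceq, hdeq, hnn]
      have h0 : t • (b - a) = 0 := by rw [← hcd, hcd', sub_self]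
      rcases smul_eq_zero.mp h0 with h | h
      · exact absurd h (ne_of_gt ht)
      · exact hba h
    -- case DADD : b axis; a, c, d disk
    · have l1 := dist_gap (p := b) (q := c) hb0ge hc0u
      have l2 := dist_small ha0l ha0u ha1l ha1u hd0l hd0u hd1l hd1u
      linarith [hiso]
    -- case DADA : b, d axis; a, c disk
    · have h1 : 0 < t * (b 0 - a 0) := mul_pos ht (by linarith)
      linarith [hcd0]
    -- case DAAD : b, c axis; a, d disk
    · have l2 := dist_small ha0l ha0u ha1l ha1u hd0l hd0u hd1l hd1u
      have lbc := coord_le_dist b c 0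
      have hnn : nb = nc := by
        apply nat_eq_of_close
        · rw [← hb0n, ← hc0n]
          have := le_abs_self (b 0 - c 0)
          linarith [hiso]
        · rw [← hc0n, ← hb0n]
          have := neg_abs_le (b 0 - c 0)
          linarith [hiso]
      have hbc : b = c := by apply WithLp.ofLp_injective 2; rw [hbeq, hceq, hnn]
      have had : a = d := dist_eq_zero.mp (by rw [hiso, hbc, dist_self])
      have e1 : d 0 - a 0 = 0 := by rw [had]; ring
      have e2 : d 1 - a 1 = 0 := by rw [had]; ring
      rw [e1, e2] at hkey
      simp at hkey
    -- case DAAA : b, c, d axis; a disk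
    · have hu1 : b 1 - a 1 = 0 := by
        have h : t * (b 1 - a 1) = 0 := by rw [← hcd1, hc1z, hd1z]; ring
        rcases mul_eq_zero.mp h with h' | h'
        · exact absurd h' (ne_of_gt ht)
        · exact h'
      have hv1 : d 1 - a 1 = 0 := by
        have : a 1 = 0 := by rw [hb1z] at hu1; linarith
        rw [hd1z, this]; ring
      rw [hu1, hv1] at hkey
      simp at hkey
    -- case ADDD : a axis; b, c, d disk
    · have l1 := dist_gap (p := a) (q := d) ha0ge hd0u
      have l2 := dist_small hb0l hb0u hb1l hb1u hc0l hc0u hc1l hc1u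
      linarith [hiso]
    -- case ADDA : a, d axis; b, c disk
    · have l2 := dist_small hb0l hb0u hb1l hb1u hc0l hc0u hc1l hc1u
      have lad := coord_le_dist a d 0
      have hnn : na = nd := by
        apply nat_eq_of_close
        · rw [← ha0n, ← hd0n]
          have := le_abs_self (a 0 - d 0)
          linarith [hiso]
        · rw [← hd0n, ← ha0n]
          have := neg_abs_le (a 0 - d 0)
          linarith [hiso]
      have had : a = d := by apply WithLp.ofLp_injective 2; rw [haeq, hdeq, hnn]
      have e1 : d 0 - a 0 = 0 := by rw [had]; ring
      have e2 : d 1 - a 1 = 0 := by rw [had]; ring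
      rw [e1, e2] at hkey
      simp at hkey
    -- case ADAD : a, c axis; b, d disk
    · have h1 : t * (b 0 - a 0) < 0 := mul_neg_of_pos_of_neg ht (by linarith)
      linarith [hcd0]
    -- case ADAA : a, c, d axis; b disk
    · have hu1 : b 1 - a 1 = 0 := by
        have h : t * (b 1 - a 1) = 0 := by rw [← hcd1, hc1z, hd1z]; ring
        rcases mul_eq_zero.mp h with h' | h'
        · exact absurd h' (ne_of_gt ht)
        · exact h'
      have hv1 : d 1 - a 1 = 0 := by rw [hd1z, ha1z]; ring
      rw [hu1, hv1] at hkey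
      simp at hkey
    -- case AADD : a, b axis; c, d disk
    · have u1 := dist_axis_disk_le ha1z ha0ge hd0l hd0u hd1l hd1u
      have u2 := dist_axis_disk_le hb1z hb0ge hc0l hc0u hc1l hc1u
      have g1 := dist_axis_disk_ge ha0ge hd0u
      have g2 := dist_axis_disk_ge hb0ge hc0u
      have hnn : na = nb := by
        apply nat_eq_of_close
        · rw [← ha0n, ← hb0n]; linarith [hiso]
        · rw [← hb0n, ← ha0n]; linarith [hiso]
      have hab : a = b := by apply WithLp.ofLp_injective 2; rw [haeq, hbeq, hnn]
      exact hba (by rw [hab, sub_self])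
    -- case AADA : a, b, d axis; c disk
    · have hu1 : b 1 - a 1 = 0 := by rw [hb1z, ha1z]; ring
      have hv1 : d 1 - a 1 = 0 := by rw [hd1z, ha1z]; ring
      rw [hu1, hv1] at hkey
      simp at hkey
    -- case AAAD : a, b, c axis; d disk
    · have hu1 : b 1 - a 1 = 0 := by rw [hb1z, ha1z]; ring
      have hd1 : d 1 = 0 := by
        have h := hcd1
        rw [hc1z, hb1z, ha1z] at h
        simp at h
        linarith
      have hv1 : d 1 - a 1 = 0 := by rw [hd1, ha1z]; ring
      rw [hu1, hv1] at hkey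
      simp at hkey
    -- case AAAA : all axis
    · have hu1 : b 1 - a 1 = 0 := by rw [hb1z, ha1z]; ring
      have hv1 : d 1 - a 1 = 0 := by rw [hd1z, ha1z]; ring
      rw [hu1, hv1] at hkey
      simp at hkey
end

section
/- Let ε ∈ (0,1), R > 100, and let A ∈ ℝ² with ‖A‖ = d > 100/ε + ε. Let ψ(r) = arcsin((R²/(R² − 1))·(2/r²)) and f(r·cos θ, r·sin θ) = (r·cos(θ + ψ(r)), r·sin(θ + ψ(r))). Then for every p ∈ B(A, ε/2), ψ(‖p‖) is defined, dist(p, f(p)) < ε/2, and f(p) ∈ B(A, ε); moreover f preserves Lebesgue measure on {p : ‖p‖ > 100}: for every measurable E ⊆ {p : ‖p‖ > 100}, μ(f(E)) = μ(E). -/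
open MeasureTheory Metric Real


noncomputable section RotationAux

/-- The rotation angle as a function of the point. -/
def rphi (K : ℝ) (p : EuclideanSpace ℝ (Fin 2)) : ℝ :=
  Real.arcsin (K * (2 / (p 0 ^ 2 + p 1 ^ 2)))

/-- The rotation map. -/
def rmap (K : ℝ) (p : EuclideanSpace ℝ (Fin 2)) : EuclideanSpace ℝ (Fin 2) :=
  WithLp.toLp 2 ![p 0 * Real.cos (rphi K p) - p 1 * Real.sin (rphi K p),
    p 0 * Real.sin (rphi K p) + p 1 * Real.cos (rphi K p)]

/-- coefficient in the derivative of `rphi`. -/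
def rm (K : ℝ) (p : EuclideanSpace ℝ (Fin 2)) : ℝ :=
  1 / Real.sqrt (1 - (K * (2 / (p 0 ^ 2 + p 1 ^ 2))) ^ 2) *
    (2 * K * -(((p 0 ^ 2 + p 1 ^ 2) ^ 2)⁻¹ * 2))

/-- Jacobian matrix of `rmap`. -/
def rmat (K : ℝ) (p : EuclideanSpace ℝ (Fin 2)) : Matrix (Fin 2) (Fin 2) ℝ :=
  !![Real.cos (rphi K p) - rm K p * (p 0 * Real.sin (rphi K p) + p 1 * Real.cos (rphi K p)) * p 0,
     -Real.sin (rphi K p) - rm K p * (p 0 * Real.sin (rphi K p) + p 1 * Real.cos (rphi K p)) * p 1;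
     Real.sin (rphi K p) + rm K p * (p 0 * Real.cos (rphi K p) - p 1 * Real.sin (rphi K p)) * p 0,
     Real.cos (rphi K p) + rm K p * (p 0 * Real.cos (rphi K p) - p 1 * Real.sin (rphi K p)) * p 1]

/-- Fréchet derivative of `rmap`. -/
def rder (K : ℝ) (p : EuclideanSpace ℝ (Fin 2)) :
    EuclideanSpace ℝ (Fin 2) →L[ℝ] EuclideanSpace ℝ (Fin 2) :=
  LinearMap.toContinuousLinearMap (Matrix.toEuclideanLin (rmat K p))

lemma rder_apply (K : ℝ) (p v : EuclideanSpace ℝ (Fin 2)) (i : Fin 2) :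
    rder K p v i = rmat K p i 0 * v 0 + rmat K p i 1 * v 1 := by
  fin_cases i <;> simp [rder, Matrix.toEuclideanLin_apply, Matrix.mulVec, dotProduct, Fin.sum_univ_two]

lemma rder_det (K : ℝ) (p : EuclideanSpace ℝ (Fin 2)) : (rder K p).det = 1 := by
  have h1 : (rder K p).det = LinearMap.det (Matrix.toEuclideanLin (rmat K p)) := by
    rw [ContinuousLinearMap.det]
    congr 1
  rw [h1, Matrix.toEuclideanLin_eq_toLin, LinearMap.det_toLin, Matrix.det_fin_two]
  simp only [rmat, Matrix.cons_val', Matrix.cons_val_zero, Matrix.cons_val_one, Matrix.head_cons,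
    Matrix.head_fin_const, Matrix.of_apply, Matrix.cons_val_fin_one]
  linear_combination Real.sin_sq_add_cos_sq (rphi K p)

abbrev prj (i : Fin 2) : EuclideanSpace ℝ (Fin 2) →L[ℝ] ℝ := EuclideanSpace.proj i

lemma norm_sq_eq (p : EuclideanSpace ℝ (Fin 2)) : ‖p‖ ^ 2 = p 0 ^ 2 + p 1 ^ 2 := by
  rw [EuclideanSpace.norm_eq, Real.sq_sqrt (by positivity)]
  simp [Fin.sum_univ_two, sq_abs]

lemma rmap_apply0 (K : ℝ) (p : EuclideanSpace ℝ (Fin 2)) :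
    rmap K p 0 = p 0 * Real.cos (rphi K p) - p 1 * Real.sin (rphi K p) := rfl

lemma rmap_apply1 (K : ℝ) (p : EuclideanSpace ℝ (Fin 2)) :
    rmap K p 1 = p 0 * Real.sin (rphi K p) + p 1 * Real.cos (rphi K p) := rfl

lemma rmap_norm (K : ℝ) (p : EuclideanSpace ℝ (Fin 2)) : ‖rmap K p‖ = ‖p‖ := by
  have h2 : ‖rmap K p‖ ^ 2 = ‖p‖ ^ 2 := by
    rw [norm_sq_eq, norm_sq_eq, rmap_apply0, rmap_apply1]
    linear_combination (p 0 ^ 2 + p 1 ^ 2) * Real.sin_sq_add_cos_sq (rphi K p)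
  calc ‖rmap K p‖ = √(‖rmap K p‖ ^ 2) := (Real.sqrt_sq (norm_nonneg _)).symm
    _ = √(‖p‖ ^ 2) := by rw [h2]
    _ = ‖p‖ := Real.sqrt_sq (norm_nonneg _)

lemma rmap_inj (K : ℝ) : Function.Injective (rmap K) := by
  intro p q h
  have hn : ‖p‖ = ‖q‖ := by rw [← rmap_norm K p, ← rmap_norm K q, h]
  have hq2 : p 0 ^ 2 + p 1 ^ 2 = q 0 ^ 2 + q 1 ^ 2 := by
    rw [← norm_sq_eq, ← norm_sq_eq, hn]
  have hphi : rphi K p = rphi K q := by rw [rphi, rphi, hq2]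
  have h0 : p 0 * Real.cos (rphi K p) - p 1 * Real.sin (rphi K p)
      = q 0 * Real.cos (rphi K p) - q 1 * Real.sin (rphi K p) := by
    have := congrFun (congrArg WithLp.ofLp h) 0
    rw [rmap_apply0, rmap_apply0, ← hphi] at this
    exact this
  have h1 : p 0 * Real.sin (rphi K p) + p 1 * Real.cos (rphi K p)
      = q 0 * Real.sin (rphi K p) + q 1 * Real.cos (rphi K p) := by
    have := congrFun (congrArg WithLp.ofLp h) 1
    rw [rmap_apply1, rmap_apply1, ← hphi] at this
    exact this
  have hpyth := Real.sin_sq_add_cos_sq (rphi K p)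
  ext i
  fin_cases i
  · show p 0 = q 0
    linear_combination Real.cos (rphi K p) * h0 + Real.sin (rphi K p) * h1
      + (q 0 - p 0) * hpyth
  · show p 1 = q 1
    linear_combination (-Real.sin (rphi K p)) * h0 + Real.cos (rphi K p) * h1
      + (q 1 - p 1) * hpyth

lemma polar_rep (p : EuclideanSpace ℝ (Fin 2)) (h : (0:ℝ) < ‖p‖) :
    ∃ θ : ℝ, p = ![‖p‖ * Real.cos θ, ‖p‖ * Real.sin θ] := by
  have hnorm : ‖p‖ = Real.sqrt (p 0 ^ 2 + p 1 ^ 2) := by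
    rw [EuclideanSpace.norm_eq]; congr 1; simp [Fin.sum_univ_two, sq_abs]
  set z : ℂ := ⟨p 0, p 1⟩ with hz
  have habs : ‖z‖ = ‖p‖ := by
    rw [Complex.norm_def, Complex.normSq_apply, hnorm]; norm_num [hz]; ring_nf
  have hz0 : z ≠ 0 := by
    intro h0; rw [h0] at habs; simp at habs; linarith
  refine ⟨Complex.arg z, ?_⟩
  have h0 : ‖p‖ * Real.cos z.arg = p 0 := by
    rw [Complex.cos_arg hz0, habs]; field_simp; rfl
  have h1 : ‖p‖ * Real.sin z.arg = p 1 := by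
    rw [Complex.sin_arg, habs]; field_simp; rfl
  funext i
  fin_cases i
  · simpa using h0.symm
  · simpa using h1.symm

lemma rmap_hasFDerivAt (K : ℝ) (p : EuclideanSpace ℝ (Fin 2))
    (hq0 : p 0 ^ 2 + p 1 ^ 2 ≠ 0)
    (hu : 0 < 1 - (K * (2 / (p 0 ^ 2 + p 1 ^ 2))) ^ 2) :
    HasFDerivAt (rmap K) (rder K p) p := by
  have hx : HasFDerivAt (fun p : EuclideanSpace ℝ (Fin 2) => p 0) (prj 0) p :=
    (prj 0).hasFDerivAt
  have hy : HasFDerivAt (fun p : EuclideanSpace ℝ (Fin 2) => p 1) (prj 1) p :=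
    (prj 1).hasFDerivAt
  have hqfun : (fun p : EuclideanSpace ℝ (Fin 2) => p 0 ^ 2 + p 1 ^ 2)
      = fun p : EuclideanSpace ℝ (Fin 2) => p 0 * p 0 + p 1 * p 1 := by
    funext p; ring
  have hq : HasFDerivAt (fun p : EuclideanSpace ℝ (Fin 2) => p 0 ^ 2 + p 1 ^ 2)
      ((p 0 • prj 0 + p 0 • prj 0) + (p 1 • prj 1 + p 1 • prj 1)) p := by
    rw [hqfun]; exact (hx.mul hx).add (hy.mul hy)
  have hinv := (hasDerivAt_inv hq0).comp_hasFDerivAt p hq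
  have hmulfun : (fun p : EuclideanSpace ℝ (Fin 2) => K * (2 / (p 0 ^ 2 + p 1 ^ 2)))
      = fun p : EuclideanSpace ℝ (Fin 2) => (2 * K) * ((p 0 ^ 2 + p 1 ^ 2)⁻¹) := by
    funext p; ring
  have hKu : HasFDerivAt (fun p : EuclideanSpace ℝ (Fin 2) => K * (2 / (p 0 ^ 2 + p 1 ^ 2)))
      ((2 * K) • ((-((p 0 ^ 2 + p 1 ^ 2) ^ 2)⁻¹) •
        ((p 0 • prj 0 + p 0 • prj 0) + (p 1 • prj 1 + p 1 • prj 1)))) p := by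
    rw [hmulfun]; exact hinv.const_mul (2 * K)
  have hune : K * (2 / (p 0 ^ 2 + p 1 ^ 2)) ≠ -1 ∧ K * (2 / (p 0 ^ 2 + p 1 ^ 2)) ≠ 1 := by
    constructor <;> intro h <;> rw [h] at hu <;> norm_num at hu
  have harc : HasFDerivAt (rphi K)
      ((1 / Real.sqrt (1 - (K * (2 / (p 0 ^ 2 + p 1 ^ 2))) ^ 2)) •
        ((2 * K) • ((-((p 0 ^ 2 + p 1 ^ 2) ^ 2)⁻¹) •
          ((p 0 • prj 0 + p 0 • prj 0) + (p 1 • prj 1 + p 1 • prj 1))))) p :=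
    (Real.hasDerivAt_arcsin hune.1 hune.2).comp_hasFDerivAt p hKu
  set Dphi := ((1 / Real.sqrt (1 - (K * (2 / (p 0 ^ 2 + p 1 ^ 2))) ^ 2)) •
        ((2 * K) • ((-((p 0 ^ 2 + p 1 ^ 2) ^ 2)⁻¹) •
          ((p 0 • prj 0 + p 0 • prj 0) + (p 1 • prj 1 + p 1 • prj 1))))) with hDphi
  have hc : HasFDerivAt (fun p => Real.cos (rphi K p)) ((-Real.sin (rphi K p)) • Dphi) p :=
    (Real.hasDerivAt_cos (rphi K p)).comp_hasFDerivAt p harc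
  have hs : HasFDerivAt (fun p => Real.sin (rphi K p)) ((Real.cos (rphi K p)) • Dphi) p :=
    (Real.hasDerivAt_sin (rphi K p)).comp_hasFDerivAt p harc
  have h0 := (hx.mul hc).sub (hy.mul hs)
  have h1 := (hx.mul hs).add (hy.mul hc)
  set D0 := (p 0 • (-Real.sin (rphi K p)) • Dphi + Real.cos (rphi K p) • prj 0) -
      (p 1 • Real.cos (rphi K p) • Dphi + Real.sin (rphi K p) • prj 1) with hD0
  set D1 := (p 0 • Real.cos (rphi K p) • Dphi + Real.sin (rphi K p) • prj 0) +
      (p 1 • (-Real.sin (rphi K p)) • Dphi + Real.cos (rphi K p) • prj 1) with hD1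
  have hPi : HasFDerivAt
      (fun p : EuclideanSpace ℝ (Fin 2) =>
        (![p 0 * Real.cos (rphi K p) - p 1 * Real.sin (rphi K p),
           p 0 * Real.sin (rphi K p) + p 1 * Real.cos (rphi K p)] : Fin 2 → ℝ))
      (ContinuousLinearMap.pi ![D0, D1]) p := by
    apply hasFDerivAt_pi.2
    intro i
    fin_cases i
    · simpa [Pi.mul_def, Pi.sub_def] using h0
    · simpa [Pi.mul_def, Pi.add_def] using h1
  have hsne : Real.sqrt (1 - (K * (2 / (p 0 ^ 2 + p 1 ^ 2))) ^ 2) ≠ 0 :=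
    (Real.sqrt_pos.mpr hu).ne'
  have hcomp : HasFDerivAt (rmap K)
      (((EuclideanSpace.equiv (Fin 2) ℝ).symm : (Fin 2 → ℝ) →L[ℝ] EuclideanSpace ℝ (Fin 2)).comp
        (ContinuousLinearMap.pi ![D0, D1])) p :=
    ((EuclideanSpace.equiv (Fin 2) ℝ).symm :
        (Fin 2 → ℝ) →L[ℝ] EuclideanSpace ℝ (Fin 2)).hasFDerivAt.comp p hPi
  have hder : rder K p
      = (((EuclideanSpace.equiv (Fin 2) ℝ).symm : (Fin 2 → ℝ) →L[ℝ] EuclideanSpace ℝ (Fin 2)).comp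
        (ContinuousLinearMap.pi ![D0, D1])) := by
    apply ContinuousLinearMap.ext
    intro v
    have hL : ∀ i, rder K p v i = rmat K p i 0 * v 0 + rmat K p i 1 * v 1 := rder_apply K p v
    have hR0 : (((EuclideanSpace.equiv (Fin 2) ℝ).symm :
        (Fin 2 → ℝ) →L[ℝ] EuclideanSpace ℝ (Fin 2)).comp
        (ContinuousLinearMap.pi ![D0, D1])) v 0 = D0 v := rfl
    have hR1 : (((EuclideanSpace.equiv (Fin 2) ℝ).symm :
        (Fin 2 → ℝ) →L[ℝ] EuclideanSpace ℝ (Fin 2)).comp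
        (ContinuousLinearMap.pi ![D0, D1])) v 1 = D1 v := rfl
    have hD0v : D0 v = (p 0 * (-Real.sin (rphi K p)) - p 1 * Real.cos (rphi K p)) *
          (rm K p * (p 0 * v 0 + p 1 * v 1)) +
          (Real.cos (rphi K p) * v 0 - Real.sin (rphi K p) * v 1) := by
      simp only [hD0, hDphi, ContinuousLinearMap.add_apply, ContinuousLinearMap.sub_apply,
        ContinuousLinearMap.coe_smul', Pi.smul_apply, prj, PiLp.proj_apply,
        smul_eq_mul, rm]
      ring
    have hD1v : D1 v = (p 0 * Real.cos (rphi K p) - p 1 * Real.sin (rphi K p)) *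
          (rm K p * (p 0 * v 0 + p 1 * v 1)) +
          (Real.sin (rphi K p) * v 0 + Real.cos (rphi K p) * v 1) := by
      simp only [hD1, hDphi, ContinuousLinearMap.add_apply,
        ContinuousLinearMap.coe_smul', Pi.smul_apply, prj, PiLp.proj_apply,
        smul_eq_mul, rm]
      ring
    ext i
    fin_cases i
    · rw [show ((⟨0, by norm_num⟩ : Fin 2)) = (0 : Fin 2) from rfl, hL 0, hR0, hD0v]
      simp only [rmat, Matrix.cons_val', Matrix.cons_val_zero, Matrix.cons_val_one,
        Matrix.head_cons, Matrix.of_apply, Matrix.cons_val_fin_one, Matrix.head_fin_const]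
      ring
    · rw [show ((⟨1, by norm_num⟩ : Fin 2)) = (1 : Fin 2) from rfl, hL 1, hR1, hD1v]
      simp only [rmat, Matrix.cons_val', Matrix.cons_val_zero, Matrix.cons_val_one,
        Matrix.head_cons, Matrix.of_apply, Matrix.cons_val_fin_one, Matrix.head_fin_const]
      ring
  rw [hder]
  have hfun : rmap K = (fun q : EuclideanSpace ℝ (Fin 2) =>
      ((EuclideanSpace.equiv (Fin 2) ℝ).symm :
        (Fin 2 → ℝ) →L[ℝ] EuclideanSpace ℝ (Fin 2))
      (![q 0 * Real.cos (rphi K q) - q 1 * Real.sin (rphi K q),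
         q 0 * Real.sin (rphi K q) + q 1 * Real.cos (rphi K q)] : Fin 2 → ℝ)) := by
    funext q; rfl
  rw [hfun]
  exact hcomp

end RotationAux

set_option maxHeartbeats 1600000 in
/-- For `ε ∈ (0,1)`, `R > 100`, `‖A‖ = d > 100/ε + ε`, and `f` the rotation of the point of
polar coordinates `(r, θ)` to `(r, θ + ψ(r))` where `ψ(r) = arcsin((R²/(R²−1))·(2/r²))`:
every `p ∈ B(A, ε/2)` satisfies `(R²/(R²−1))·(2/‖p‖²) < 1` (so `ψ(‖p‖)` is defined),
`dist p (f p) < ε/2`, `f p ∈ B(A, ε)`, and `f` preserves Lebesgue measure on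
`{p : ‖p‖ > 100}`. -/
theorem rotation_psi_maps_ball_and_preserves_measure (ε R : ℝ) (hε0 : 0 < ε) (hε1 : ε < 1)
    (hR : 100 < R) (A : EuclideanSpace ℝ (Fin 2)) (d : ℝ) (hd : ‖A‖ = d)
    (hdlarge : 100 / ε + ε < d)
    (f : EuclideanSpace ℝ (Fin 2) → EuclideanSpace ℝ (Fin 2))
    (hf : ∀ r θ : ℝ, 100 < r →
      f (WithLp.toLp 2 ![r * Real.cos θ, r * Real.sin θ]) =
        WithLp.toLp 2 ![r * Real.cos (θ + Real.arcsin (R ^ 2 / (R ^ 2 - 1) * (2 / r ^ 2))),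
          r * Real.sin (θ + Real.arcsin (R ^ 2 / (R ^ 2 - 1) * (2 / r ^ 2)))]) :
    (∀ p ∈ ball A (ε / 2),
      R ^ 2 / (R ^ 2 - 1) * (2 / ‖p‖ ^ 2) < 1 ∧ dist p (f p) < ε / 2 ∧ f p ∈ ball A ε) ∧
    ∀ E : Set (EuclideanSpace ℝ (Fin 2)),
      E ⊆ {p : EuclideanSpace ℝ (Fin 2) | 100 < ‖p‖} → MeasurableSet E →
      volume (f '' E) = volume E := by
  have hR2 : (1:ℝ) < R ^ 2 := by nlinarith
  set K : ℝ := R ^ 2 / (R ^ 2 - 1) with hKdef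
  have hK0 : 0 < K := div_pos (by positivity) (by nlinarith)
  have hK2 : K < 2 := by rw [hKdef, div_lt_iff₀ (by nlinarith)]; nlinarith
  have hfr : ∀ p : EuclideanSpace ℝ (Fin 2), 100 < ‖p‖ → f p = rmap K p := by
    intro p hp
    obtain ⟨θ, hθ⟩ := polar_rep p (by linarith)
    have hp0 : p 0 = ‖p‖ * Real.cos θ := by simpa using congrFun hθ 0
    have hp1 : p 1 = ‖p‖ * Real.sin θ := by simpa using congrFun hθ 1
    have hns : ‖p‖ ^ 2 = p 0 ^ 2 + p 1 ^ 2 := norm_sq_eq p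
    have h := hf ‖p‖ θ hp
    rw [← hθ, WithLp.toLp_ofLp] at h
    rw [h]
    have ha : Real.arcsin (K * (2 / ‖p‖ ^ 2)) = rphi K p := by rw [rphi, hns]
    ext i
    fin_cases i
    · show ‖p‖ * Real.cos (θ + Real.arcsin (K * (2 / ‖p‖ ^ 2))) = rmap K p 0
      rw [ha, rmap_apply0, Real.cos_add, hp0, hp1]; ring
    · show ‖p‖ * Real.sin (θ + Real.arcsin (K * (2 / ‖p‖ ^ 2))) = rmap K p 1
      rw [ha, rmap_apply1, Real.sin_add, hp0, hp1]; ring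
  constructor
  · intro p hp
    have hdistpA : dist p A < ε / 2 := mem_ball.1 hp
    have h1 := abs_norm_sub_norm_le p A
    rw [← dist_eq_norm] at h1
    have h2 := (abs_le.1 h1).1
    rw [hd] at h2
    have hpn : 100 / ε + ε / 2 < ‖p‖ := by linarith
    have h100ε : (100:ℝ) < 100 / ε := by rw [lt_div_iff₀ hε0]; nlinarith
    have h100 : 100 < ‖p‖ := by linarith
    have hns : ‖p‖ ^ 2 = p 0 ^ 2 + p 1 ^ 2 := norm_sq_eq p
    have hqpos : (0:ℝ) < p 0 ^ 2 + p 1 ^ 2 := by nlinarith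
    set u : ℝ := K * (2 / (p 0 ^ 2 + p 1 ^ 2)) with hudef
    have huq : u * (p 0 ^ 2 + p 1 ^ 2) = 2 * K := by rw [hudef]; field_simp
    have hu0 : 0 < u := by rw [hudef]; positivity
    have hqbig : (100 / ε) ^ 2 < p 0 ^ 2 + p 1 ^ 2 := by
      rw [← hns]
      have hw : 100 / ε < ‖p‖ := by linarith
      have hw0 : 0 < 100 / ε := by positivity
      nlinarith
    have hulow : u < ε ^ 2 / 2500 := by
      have hl : u * (100 / ε) ^ 2 < u * (p 0 ^ 2 + p 1 ^ 2) :=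
        mul_lt_mul_of_pos_left hqbig hu0
      rw [huq] at hl
      have hl2 : u * (10000 / ε ^ 2) < 4 := by
        have : (100 / ε) ^ 2 = 10000 / ε ^ 2 := by rw [div_pow]; norm_num
        nlinarith [this]
      rw [show u * (10000 / ε ^ 2) = u * 10000 / ε ^ 2 by ring] at hl2
      have hl3 : u * 10000 < 4 * ε ^ 2 := by
        have := (div_lt_iff₀ (by positivity : (0:ℝ) < ε ^ 2)).1 hl2
        linarith
      rw [lt_div_iff₀ (by norm_num : (0:ℝ) < 2500)]
      linarith
    have hu1 : u < 1 := by
      have hq1 : ε ^ 2 / 2500 < 1 := by nlinarith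
      linarith
    have ha : K * (2 / ‖p‖ ^ 2) < 1 := by rw [hns]; exact hu1
    have h1mu : 0 ≤ 1 - u ^ 2 := by nlinarith
    have hdistlt : dist p (f p) < ε / 2 := by
      rw [hfr p h100]
      have hdist_sq : dist p (rmap K p) ^ 2
          = 2 * (p 0 ^ 2 + p 1 ^ 2) * (1 - Real.cos (rphi K p)) := by
        rw [EuclideanSpace.dist_eq, Real.sq_sqrt (by positivity), Fin.sum_univ_two,
          Real.dist_eq, Real.dist_eq, sq_abs, sq_abs, rmap_apply0, rmap_apply1]
        linear_combination (p 0 ^ 2 + p 1 ^ 2) * Real.sin_sq_add_cos_sq (rphi K p)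
      have hcosphi : Real.cos (rphi K p) = Real.sqrt (1 - u ^ 2) := by
        rw [rphi, ← hudef]; exact Real.cos_arcsin u
      have hcb : 1 - Real.cos (rphi K p) ≤ u ^ 2 := by
        rw [hcosphi]
        have hsq := Real.sq_sqrt h1mu
        have hsn := Real.sqrt_nonneg (1 - u ^ 2)
        have hle1 : Real.sqrt (1 - u ^ 2) ≤ 1 := Real.sqrt_le_one.mpr (by nlinarith)
        nlinarith
      have hkey : dist p (rmap K p) ^ 2 < (ε / 2) ^ 2 := by
        rw [hdist_sq]
        have a1 : 2 * (p 0 ^ 2 + p 1 ^ 2) * (1 - Real.cos (rphi K p))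
            ≤ 2 * (p 0 ^ 2 + p 1 ^ 2) * u ^ 2 := by nlinarith
        have a2 : 2 * (p 0 ^ 2 + p 1 ^ 2) * u ^ 2 = 4 * K * u := by
          linear_combination 2 * u * huq
        have a3 : 4 * K * u < 8 * (ε ^ 2 / 2500) := by nlinarith
        have a4 : 8 * (ε ^ 2 / 2500) < (ε / 2) ^ 2 := by nlinarith [pow_pos hε0 2]
        linarith
      exact lt_of_pow_lt_pow_left₀ 2 (by positivity) hkey
    refine ⟨ha, hdistlt, ?_⟩
    rw [mem_ball]
    calc dist (f p) A ≤ dist (f p) p + dist p A := dist_triangle _ _ _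
      _ < ε / 2 + ε / 2 := by rw [dist_comm]; exact add_lt_add hdistlt hdistpA
      _ = ε := by ring
  · intro E hE hEm
    have hfE : Set.EqOn f (rmap K) E := fun x hx => hfr x (hE hx)
    rw [Set.image_congr hfE]
    have hder : ∀ x ∈ E, HasFDerivWithinAt (rmap K) (rder K x) E x := by
      intro x hx
      have hx100 : 100 < ‖x‖ := hE hx
      have hns := norm_sq_eq x
      have hqpos : (0:ℝ) < x 0 ^ 2 + x 1 ^ 2 := by nlinarith
      have hqbig : (10000:ℝ) < x 0 ^ 2 + x 1 ^ 2 := by nlinarith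
      have hu0 : 0 < K * (2 / (x 0 ^ 2 + x 1 ^ 2)) := by positivity
      have huq : K * (2 / (x 0 ^ 2 + x 1 ^ 2)) * (x 0 ^ 2 + x 1 ^ 2) = 2 * K := by field_simp
      have hu1 : K * (2 / (x 0 ^ 2 + x 1 ^ 2)) < 1 := by nlinarith
      exact (rmap_hasFDerivAt K x (ne_of_gt hqpos) (by nlinarith)).hasFDerivWithinAt
    have h := lintegral_abs_det_fderiv_eq_addHaar_image volume hEm hder ((rmap_inj K).injOn)
    rw [← h]
    simp only [rder_det, abs_one, ENNReal.ofReal_one]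
    exact setLIntegral_one E
end
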